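/- arXiv:2605.11449 — 3 statements merged into one kernel-verified Lean document; each statement's English description precedes it below -/
import Mathlib

section
/- Let I = {j} consist of a single modified vertex and J = S \ {s_j}. Then the total number of chips in the unique final configuration of the Modified Kostant Game with active set {j} equals the sum, over all positive coroots γ^∨ of Φ that do not lie in the coroot subsystem generated by {α_i^∨ : i ≠ j}, of the coefficient of α_j^∨ in the expansion of γ^∨ in simple coroots. -/
open scoped Classical RealInnerProductSpace

noncomputable section

variable {n d : ℕ}

/-- The pairing `⟨β, γ^∨⟩ = 2(β,γ)/(γ,γ)` of a vector with a coroot. -/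
def rsPair (β γ : EuclideanSpace ℝ (Fin d)) : ℝ := 2 * ⟪β, γ⟫ / ⟪γ, γ⟫

/-- The coroot `γ^∨ = 2γ/(γ,γ)`. -/
def rsCoroot (γ : EuclideanSpace ℝ (Fin d)) : EuclideanSpace ℝ (Fin d) :=
  (2 / ⟪γ, γ⟫) • γ

/-- `⟨·, γ^∨⟩` as a linear functional. -/
def corootForm (γ : EuclideanSpace ℝ (Fin d)) : EuclideanSpace ℝ (Fin d) →ₗ[ℝ] ℝ where
  toFun x := 2 * ⟪x, γ⟫ / ⟪γ, γ⟫
  map_add' x y := by simp only [inner_add_left]; ring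
  map_smul' c x := by simp only [real_inner_smul_left, RingHom.id_apply, smul_eq_mul]; ring

/-- A finite reduced crystallographic root system in the Euclidean space `ℝ^d`, together with a
chosen base of simple roots `α 0, …, α (n-1)`: every root is an integral linear combination of
the simple roots with all coefficients nonnegative or all nonpositive. -/
structure RootSystemBase (n d : ℕ) : Type where
  Φ : Finset (EuclideanSpace ℝ (Fin d))
  α : Fin n → EuclideanSpace ℝ (Fin d)
  α_mem : ∀ i, α i ∈ Φ
  nonzero : ∀ β ∈ Φ, β ≠ 0
  reduced : ∀ β ∈ Φ, ∀ t : ℝ, t • β ∈ Φ → t = 1 ∨ t = -1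
  crystallographic : ∀ β ∈ Φ, ∀ γ ∈ Φ, ∃ k : ℤ, rsPair β γ = (k : ℝ)
  reflClosed : ∀ β ∈ Φ, ∀ γ ∈ Φ, β - rsPair β γ • γ ∈ Φ
  indep : LinearIndependent ℝ α
  base : ∀ β ∈ Φ, ∃ c : Fin n → ℤ,
    β = ∑ i, (c i : ℝ) • α i ∧ ((∀ i, 0 ≤ c i) ∨ (∀ i, c i ≤ 0))

/-- The extended space `E' = E ⊕ ℝ^I`. -/
abbrev ExtSp (n d : ℕ) (I : Finset (Fin n)) : Type :=
  EuclideanSpace ℝ (Fin d) × ({p : Fin n // p ∈ I} → ℝ)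

/-- The total source vector `β = ∑_{p ∈ I} β_p` in the extended space. -/
def betaVec (n d : ℕ) (I : Finset (Fin n)) : ExtSp n d I := (0, fun _ => 1)

namespace RootSystemBase

variable (R : RootSystemBase n d)

lemma alpha_ne_zero (i : Fin n) : R.α i ≠ 0 := R.nonzero _ (R.α_mem i)

lemma inner_alpha_ne_zero (i : Fin n) : ⟪R.α i, R.α i⟫ ≠ 0 := fun h =>
  R.alpha_ne_zero i ((inner_self_eq_zero (𝕜 := ℝ)).mp h)

lemma corootForm_alpha_self (i : Fin n) : corootForm (R.α i) (R.α i) = 2 := by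
  have h2 := R.inner_alpha_ne_zero i
  show 2 * ⟪R.α i, R.α i⟫ / ⟪R.α i, R.α i⟫ = 2
  rw [mul_div_assoc, div_self h2, mul_one]

/-- The simple reflection `s_i : x ↦ x - ⟨x, α_i^∨⟩ α_i` as a linear automorphism of `E`. -/
def sRefl (i : Fin n) :
    EuclideanSpace ℝ (Fin d) ≃ₗ[ℝ] EuclideanSpace ℝ (Fin d) :=
  Module.reflection (R.corootForm_alpha_self i)

/-- The Weyl group `W`, as the subgroup of linear automorphisms of `E` generated by the
simple reflections. -/
def weyl : Subgroup (EuclideanSpace ℝ (Fin d) ≃ₗ[ℝ] EuclideanSpace ℝ (Fin d)) :=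
  Subgroup.closure (Set.range R.sRefl)

/-- `wordProd [i₁, …, i_t] = s_{i₁} ⋯ s_{i_t}`. -/
def wordProd (l : List (Fin n)) :
    EuclideanSpace ℝ (Fin d) ≃ₗ[ℝ] EuclideanSpace ℝ (Fin d) :=
  (l.map R.sRefl).prod

/-- The Weyl group element `s_{i_t} ⋯ s_{i_1}` associated to the firing sequence
`(i_1, …, i_t)`. -/
def seqProd (l : List (Fin n)) :
    EuclideanSpace ℝ (Fin d) ≃ₗ[ℝ] EuclideanSpace ℝ (Fin d) :=
  (l.reverse.map R.sRefl).prod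

/-- The length function `ℓ` of the Coxeter system `(W, S)`: the minimal number of simple
reflections needed to express `w`. -/
def len (w : EuclideanSpace ℝ (Fin d) ≃ₗ[ℝ] EuclideanSpace ℝ (Fin d)) : ℕ :=
  sInf {t | ∃ l : List (Fin n), l.length = t ∧ R.wordProd l = w}

/-- The set `W^J` of minimal length representatives of `W/W_J`, for `J = S \ {s_i : i ∈ I}`:
those `w ∈ W` with `ℓ(w s_j) > ℓ(w)` for all `j ∉ I`. -/
def minReps (I : Finset (Fin n)) :
    Set (EuclideanSpace ℝ (Fin d) ≃ₗ[ℝ] EuclideanSpace ℝ (Fin d)) :=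
  {w | w ∈ R.weyl ∧ ∀ j, j ∉ I → R.len w < R.len (w * R.sRefl j)}

/-- The Cartan matrix `a_{uv} = ⟨α_u, α_v^∨⟩` (an integer by crystallinity). -/
def cartan (u v : Fin n) : ℤ := ⌊rsPair (R.α u) (R.α v)⌋

/-- The set `Φ⁺` of positive roots. -/
def posRoots : Finset (EuclideanSpace ℝ (Fin d)) :=
  R.Φ.filter fun β => ∃ c : Fin n → ℤ, β = ∑ i, (c i : ℝ) • R.α i ∧ ∀ i, 0 ≤ c i

/-- The set `Φ_P⁺` of positive roots lying in the span of the simple roots `α_j`, `j ∈ P`. -/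
def parPos (P : Finset (Fin n)) : Finset (EuclideanSpace ℝ (Fin d)) :=
  R.posRoots.filter fun β => β ∈ Submodule.span ℝ (R.α '' (P : Set (Fin n)))

/-- `∑_{u ≠ v} (−a_{uv}) c_u + [v ∈ I]`. -/
def chipBound (I : Finset (Fin n)) (c : Fin n → ℤ) (v : Fin n) : ℤ :=
  (∑ u ∈ Finset.univ.erase v, -(R.cartan u v) * c u) + (if v ∈ I then 1 else 0)

/-- Vertex `v` is sad in the configuration `c` (Modified Kostant Game with active set `I`). -/
def Sad (I : Finset (Fin n)) (c : Fin n → ℤ) (v : Fin n) : Prop :=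
  2 * c v < R.chipBound I c v

/-- Firing vertex `v`. -/
def fire (I : Finset (Fin n)) (c : Fin n → ℤ) (v : Fin n) : Fin n → ℤ :=
  Function.update c v (R.chipBound I c v - c v)

end RootSystemBase

/-- `ValidFrom R I c l`: starting from the configuration `c`, the sequence `l` fires a sad
vertex at each step. -/
def RootSystemBase.ValidFrom (R : RootSystemBase n d) (I : Finset (Fin n)) :
    (Fin n → ℤ) → List (Fin n) → Prop
  | _, [] => True
  | c, v :: l => R.Sad I c v ∧ RootSystemBase.ValidFrom R I (R.fire I c v) l

namespace RootSystemBase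

variable (R : RootSystemBase n d)

/-- A valid firing sequence: starts at the zero configuration and fires a sad vertex at
each step. -/
def Valid (I : Finset (Fin n)) (l : List (Fin n)) : Prop := R.ValidFrom I 0 l

/-- The configuration reached after playing the sequence `l` from the zero configuration. -/
def play (I : Finset (Fin n)) (l : List (Fin n)) : Fin n → ℤ :=
  l.foldl (R.fire I) 0

/-- A maximal valid firing sequence: no vertex is sad in the final configuration. -/
def MaximalSeq (I : Finset (Fin n)) (l : List (Fin n)) : Prop :=
  R.Valid I l ∧ ∀ v, ¬ R.Sad I (R.play I l) v

/-- The (integer) coefficients of a vector in the basis of simple coroots, when they exist. -/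
def corootCoeffs (x : EuclideanSpace ℝ (Fin d)) : Fin n → ℤ :=
  if h : ∃ k : Fin n → ℤ, x = ∑ j, (k j : ℝ) • rsCoroot (R.α j) then h.choose else 0

/-- The `I`-height of a (co)vector: the sum over `j ∈ I` of its coefficients in the basis
of simple coroots. -/
def htI (I : Finset (Fin n)) (x : EuclideanSpace ℝ (Fin d)) : ℤ :=
  ∑ j ∈ I, R.corootCoeffs x j

end RootSystemBase

/-- The extended pairing `⟨·, α_i^∨⟩` on `E' = E ⊕ ℝ^I`, determined by
`⟨β_p, α_i^∨⟩ = −δ_{pi}`, as a linear functional. -/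
def extForm (R : RootSystemBase n d) (I : Finset (Fin n)) (i : Fin n) :
    ExtSp n d I →ₗ[ℝ] ℝ :=
  (corootForm (R.α i)).comp (LinearMap.fst ℝ _ _) -
    (if h : i ∈ I then
      (LinearMap.proj (R := ℝ) (φ := fun _ : {p : Fin n // p ∈ I} => ℝ) ⟨i, h⟩).comp
        (LinearMap.snd ℝ _ _)
    else 0)

namespace RootSystemBase

variable (R : RootSystemBase n d)

lemma extForm_apply (I : Finset (Fin n)) (i : Fin n) (x : ExtSp n d I) :
    extForm R I i x = corootForm (R.α i) x.1 - (if h : i ∈ I then x.2 ⟨i, h⟩ else 0) := by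
  by_cases h : i ∈ I <;> simp [extForm, h]

lemma extForm_alpha (I : Finset (Fin n)) (i : Fin n) :
    extForm R I i ((R.α i, 0) : ExtSp n d I) = 2 := by
  rw [R.extForm_apply]
  simp [R.corootForm_alpha_self i]

/-- The simple reflection `s_i : x ↦ x − ⟨x, α_i^∨⟩ α_i` on the extended space `E'`. -/
def extRefl (I : Finset (Fin n)) (i : Fin n) : ExtSp n d I ≃ₗ[ℝ] ExtSp n d I :=
  Module.reflection (R.extForm_alpha I i)

/-- The extended pairing `⟨x, α_i^∨⟩` for `x ∈ E'`. -/
def extPair (I : Finset (Fin n)) (x : ExtSp n d I) (i : Fin n) : ℝ := extForm R I i x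

/-- The action of `s_{i_t} ⋯ s_{i_1}` on the extended space `E'`. -/
def extSeqProd (I : Finset (Fin n)) (l : List (Fin n)) : ExtSp n d I ≃ₗ[ℝ] ExtSp n d I :=
  (l.reverse.map (R.extRefl I)).prod

end RootSystemBase

section Aux
open Finset
variable {n d : ℕ}

local notation "E" => EuclideanSpace ℝ (Fin d)

lemma inner_self_pos' {x : E} (hx : x ≠ 0) : 0 < ⟪x, x⟫ :=
  lt_of_le_of_ne real_inner_self_nonneg (fun h => hx (inner_self_eq_zero.mp h.symm))

lemma rsPair_eq_form (x γ : E) : rsPair x γ = corootForm γ x := rfl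

lemma rsPair_self {γ : E} (hγ : γ ≠ 0) : rsPair γ γ = 2 := by
  have h : ⟪γ, γ⟫ ≠ 0 := ne_of_gt (inner_self_pos' hγ)
  unfold rsPair; rw [mul_div_assoc, div_self h, mul_one]

lemma rsPair_neg_left (x γ : E) : rsPair (-x) γ = -rsPair x γ := by
  unfold rsPair; rw [inner_neg_left]; ring

lemma rsPair_neg_right (x γ : E) : rsPair x (-γ) = -rsPair x γ := by
  unfold rsPair; rw [inner_neg_right, inner_neg_neg]; ring

lemma rsPair_sub_left (x y γ : E) : rsPair (x - y) γ = rsPair x γ - rsPair y γ := by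
  unfold rsPair; rw [inner_sub_left]; ring

lemma rsPair_eq_inner_coroot (x γ : E) : rsPair x γ = ⟪x, rsCoroot γ⟫ := by
  unfold rsPair rsCoroot
  rw [real_inner_smul_right, real_inner_comm]; ring

lemma rsCoroot_neg (γ : E) : rsCoroot (-γ) = -rsCoroot γ := by
  unfold rsCoroot; rw [inner_neg_neg, smul_neg]

lemma rsCoroot_ne_zero {γ : E} (hγ : γ ≠ 0) : rsCoroot γ ≠ 0 := by
  unfold rsCoroot
  intro h
  rcases smul_eq_zero.mp h with h1 | h2
  · exact (div_ne_zero two_ne_zero (ne_of_gt (inner_self_pos' hγ))) h1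
  · exact hγ h2

namespace RootSystemBase
variable (R : RootSystemBase n d)

lemma inner_alpha_pos (v : Fin n) : 0 < ⟪R.α v, R.α v⟫ := inner_self_pos' (R.alpha_ne_zero v)

lemma sRefl_apply' (v : Fin n) (x : E) :
    R.sRefl v x = x - rsPair x (R.α v) • R.α v := Module.reflection_apply x _

lemma sRefl_sRefl (v : Fin n) (x : E) : R.sRefl v (R.sRefl v x) = x :=
  Module.involutive_reflection (R.corootForm_alpha_self v) x

lemma inner_sRefl (v : Fin n) (x y : E) : ⟪R.sRefl v x, R.sRefl v y⟫ = ⟪x, y⟫ := by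
  rw [sRefl_apply', sRefl_apply']
  have h := R.inner_alpha_pos v
  have h' : ⟪R.α v, R.α v⟫ ≠ 0 := ne_of_gt h
  unfold rsPair
  simp only [inner_sub_left, inner_sub_right, real_inner_smul_left, real_inner_smul_right]
  rw [real_inner_comm (R.α v) y]
  set s := ⟪R.α v, R.α v⟫ with hs
  set a := ⟪x, y⟫ with ha
  set p := ⟪x, R.α v⟫ with hp
  set q := ⟪y, R.α v⟫ with hq
  field_simp
  ring

lemma sRefl_mem {β : E} (hβ : β ∈ R.Φ) (v : Fin n) : R.sRefl v β ∈ R.Φ := by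
  rw [sRefl_apply']
  exact R.reflClosed β hβ _ (R.α_mem v)

lemma sRefl_alpha_self (v : Fin n) : R.sRefl v (R.α v) = -R.α v := by
  rw [sRefl_apply', rsPair_self (R.alpha_ne_zero v), two_smul]
  abel

lemma wordProd_nil (x : E) : R.wordProd [] x = x := rfl

lemma wordProd_cons (i : Fin n) (l : List (Fin n)) (x : E) :
    R.wordProd (i :: l) x = R.sRefl i (R.wordProd l x) := by
  unfold wordProd
  rw [List.map_cons, List.prod_cons]
  rfl

lemma wordProd_append (l₁ l₂ : List (Fin n)) (x : E) :
    R.wordProd (l₁ ++ l₂) x = R.wordProd l₁ (R.wordProd l₂ x) := by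
  unfold wordProd
  rw [List.map_append, List.prod_append]
  rfl

lemma wordProd_concat (l : List (Fin n)) (v : Fin n) (x : E) :
    R.wordProd (l ++ [v]) x = R.wordProd l (R.sRefl v x) := by
  rw [wordProd_append]
  congr 1

lemma wordProd_reverse_cancel (l : List (Fin n)) (x : E) :
    R.wordProd l.reverse (R.wordProd l x) = x := by
  induction l generalizing x with
  | nil => rfl
  | cons i l ih =>
      rw [wordProd_cons, List.reverse_cons, wordProd_concat, sRefl_sRefl, ih]

lemma wordProd_cancel_reverse (l : List (Fin n)) (x : E) :
    R.wordProd l (R.wordProd l.reverse x) = x := by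
  have := R.wordProd_reverse_cancel l.reverse x
  rwa [List.reverse_reverse] at this

lemma inner_wordProd (l : List (Fin n)) (x y : E) :
    ⟪R.wordProd l x, R.wordProd l y⟫ = ⟪x, y⟫ := by
  induction l generalizing x y with
  | nil => rfl
  | cons i l ih => rw [wordProd_cons, wordProd_cons, inner_sRefl, ih]

lemma rsPair_wordProd (l : List (Fin n)) (x y : E) :
    rsPair (R.wordProd l x) (R.wordProd l y) = rsPair x y := by
  unfold rsPair
  rw [inner_wordProd, inner_wordProd]

lemma inner_wordProd_left (l : List (Fin n)) (x y : E) :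
    ⟪R.wordProd l x, y⟫ = ⟪x, R.wordProd l.reverse y⟫ := by
  conv_lhs => rw [← R.wordProd_cancel_reverse l y]
  rw [inner_wordProd]

lemma wordProd_mem {β : E} (hβ : β ∈ R.Φ) (l : List (Fin n)) : R.wordProd l β ∈ R.Φ := by
  induction l with
  | nil => exact hβ
  | cons i l ih => rw [wordProd_cons]; exact R.sRefl_mem ih i

lemma rsCoroot_wordProd (l : List (Fin n)) (γ : E) :
    rsCoroot (R.wordProd l γ) = R.wordProd l (rsCoroot γ) := by
  unfold rsCoroot
  rw [inner_wordProd, map_smul]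

lemma neg_mem {β : E} (hβ : β ∈ R.Φ) : -β ∈ R.Φ := by
  have h := R.reflClosed β hβ β hβ
  rw [rsPair_self (R.nonzero β hβ), two_smul] at h
  have : β - (β + β) = -β := by abel
  rwa [this] at h

lemma coords_injR (a b : Fin n → ℝ) (h : ∑ i, a i • R.α i = ∑ i, b i • R.α i) : a = b := by
  have h2 : ∑ i, (a i - b i) • R.α i = 0 := by
    simp only [sub_smul, Finset.sum_sub_distrib, h, sub_self]
  funext i
  have := Fintype.linearIndependent_iff.mp R.indep _ h2 i
  linarith

end RootSystemBase
end Aux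
section Aux2
open Finset
variable {n d : ℕ}
local notation "E" => EuclideanSpace ℝ (Fin d)

/-- positivity of a vector with respect to the base -/
def IsPos (R : RootSystemBase n d) (β : E) : Prop :=
  ∃ c : Fin n → ℤ, β = ∑ i, (c i : ℝ) • R.α i ∧ ∀ i, 0 ≤ c i

namespace RootSystemBase
variable (R : RootSystemBase n d)

lemma coords_injZ (a b : Fin n → ℤ)
    (h : ∑ i, (a i : ℝ) • R.α i = ∑ i, (b i : ℝ) • R.α i) : a = b := by
  have := R.coords_injR _ _ h
  funext i
  have hi := congrFun this i
  exact_mod_cast hi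

lemma isPos_alpha (v : Fin n) : IsPos R (R.α v) := by
  refine ⟨fun i => if i = v then 1 else 0, ?_, fun i => by positivity⟩
  rw [Finset.sum_eq_single v]
  · simp
  · intro b _ hb; simp [hb]
  · intro hv; exact absurd (Finset.mem_univ v) hv

lemma pos_neg_absurd {β : E} (hβ : β ∈ R.Φ) (h1 : IsPos R β) (h2 : IsPos R (-β)) : False := by
  obtain ⟨c, hc, hcn⟩ := h1
  obtain ⟨e, he, hen⟩ := h2
  have hsum : ∑ i, ((c i + e i : ℤ) : ℝ) • R.α i = ∑ i, ((0 : ℤ) : ℝ) • R.α i := by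
    push_cast
    simp only [add_smul, Finset.sum_add_distrib, ← hc, ← he]
    simp
  have hce := R.coords_injZ _ _ hsum
  have hc0 : ∀ i, c i = 0 := by
    intro i
    have := congrFun hce i
    have h1 := hcn i; have h2 := hen i
    omega
  apply R.nonzero β hβ
  rw [hc]
  apply Finset.sum_eq_zero
  intro i _
  rw [hc0 i]
  simp

lemma isPos_or_neg {β : E} (hβ : β ∈ R.Φ) : IsPos R β ∨ IsPos R (-β) := by
  obtain ⟨c, hc, hs | hs⟩ := R.base β hβ
  · exact Or.inl ⟨c, hc, hs⟩
  · refine Or.inr ⟨fun i => -c i, ?_, fun i => neg_nonneg.mpr (hs i)⟩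
    rw [hc, ← Finset.sum_neg_distrib]
    push_cast
    simp [neg_smul]

lemma cartan_real (u v : Fin n) : ((R.cartan u v : ℤ) : ℝ) = rsPair (R.α u) (R.α v) := by
  obtain ⟨k, hk⟩ := R.crystallographic _ (R.α_mem u) _ (R.α_mem v)
  rw [cartan, hk, Int.floor_intCast]

lemma inner_alpha_nonpos {u v : Fin n} (huv : u ≠ v) : ⟪R.α u, R.α v⟫ ≤ 0 := by
  by_contra hcon
  push_neg at hcon
  obtain ⟨k, hk⟩ := R.crystallographic _ (R.α_mem u) _ (R.α_mem v)
  have hvv := R.inner_alpha_pos v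
  have hkpos : (0:ℝ) < (k:ℝ) := by
    rw [← hk]
    unfold rsPair
    positivity
  have hk1 : 1 ≤ k := by exact_mod_cast hkpos
  have hs : R.α u - (k : ℝ) • R.α v ∈ R.Φ := by
    have := R.reflClosed _ (R.α_mem u) _ (R.α_mem v)
    rwa [hk] at this
  obtain ⟨c, hc, hcs⟩ := R.base _ hs
  have hrep : R.α u - (k : ℝ) • R.α v
      = ∑ i, ((fun i => (if i = u then (1:ℤ) else 0) + (if i = v then -k else 0)) i : ℝ) • R.α i := by
    push_cast
    simp only [add_smul, Finset.sum_add_distrib]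
    rw [Finset.sum_eq_single u (fun b _ hb => by simp [hb]) (fun h => absurd (Finset.mem_univ u) h)]
    rw [Finset.sum_eq_single v (fun b _ hb => by simp [hb]) (fun h => absurd (Finset.mem_univ v) h)]
    simp [sub_eq_add_neg]
  have hce := R.coords_injZ _ _ (hc.symm.trans hrep)
  have hcu : c u = 1 := by have := congrFun hce u; simpa [huv] using this
  have hcv : c v = -k := by have := congrFun hce v; simpa [Ne.symm huv] using this
  rcases hcs with hs1 | hs1
  · have := hs1 v; omega
  · have := hs1 u; omega

lemma sRefl_pos {γ : E} (hγ : γ ∈ R.Φ) (hp : IsPos R γ) (v : Fin n) (hne : γ ≠ R.α v) :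
    IsPos R (R.sRefl v γ) := by
  obtain ⟨c, hc, hcn⟩ := hp
  obtain ⟨k, hk⟩ := R.crystallographic _ hγ _ (R.α_mem v)
  -- find u ≠ v with c u ≥ 1
  have hexu : ∃ u, u ≠ v ∧ 1 ≤ c u := by
    by_contra hcon
    push_neg at hcon
    have hrest : ∀ u, u ≠ v → c u = 0 := by
      intro u hu; have h1 := hcon u hu; have h2 := hcn u; omega
    have hγv : γ = ((c v : ℤ) : ℝ) • R.α v := by
      rw [hc, Finset.sum_eq_single v (fun b _ hb => by rw [hrest b hb]; simp)
        (fun h => absurd (Finset.mem_univ v) h)]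
    have hcv0 : c v ≠ 0 := by
      intro h0
      apply R.nonzero γ hγ
      rw [hγv, h0]; simp
    have := R.reduced _ (R.α_mem v) ((c v : ℤ) : ℝ) (by rw [← hγv]; exact hγ)
    rcases this with h1 | h1
    · apply hne; rw [hγv, h1, one_smul]
    · have : c v = -1 := by exact_mod_cast h1
      have := hcn v; omega
  obtain ⟨u, huv, hcu⟩ := hexu
  have hsγ : R.sRefl v γ ∈ R.Φ := R.sRefl_mem hγ v
  obtain ⟨e, he, hes⟩ := R.base _ hsγ
  have hrep : R.sRefl v γ = ∑ i, ((fun i => c i - if i = v then k else 0) i : ℝ) • R.α i := by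
    rw [R.sRefl_apply', hk, hc]
    push_cast
    simp only [sub_smul, Finset.sum_sub_distrib]
    congr 1
    rw [Finset.sum_eq_single v (fun b _ hb => by simp [hb]) (fun h => absurd (Finset.mem_univ v) h)]
    simp
  have hce := R.coords_injZ _ _ (he.symm.trans hrep)
  have heu : e u = c u := by have := congrFun hce u; simpa [huv] using this
  rcases hes with hs1 | hs1
  · exact ⟨e, he, hs1⟩
  · have := hs1 u; omega

lemma eq_alpha_of_pos_neg {γ : E} {v : Fin n} (hγ : γ ∈ R.Φ) (hp : IsPos R γ)
    (hn : IsPos R (-(R.sRefl v γ))) : γ = R.α v := by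
  by_contra hne
  exact R.pos_neg_absurd (R.sRefl_mem hγ v) (R.sRefl_pos hγ hp v hne) hn

lemma wordProd_conj (M : List (Fin n)) (v q : Fin n)
    (h : R.wordProd M (R.α v) = R.α q) (x : E) :
    R.wordProd M (R.sRefl v x) = R.sRefl q (R.wordProd M x) := by
  rw [R.sRefl_apply' v x, map_sub, map_smul, h, R.sRefl_apply' q]
  congr 2
  rw [← h, rsPair_wordProd]

lemma deletion : ∀ (M : List (Fin n)) (v : Fin n), IsPos R (-(R.wordProd M (R.α v))) →
    ∃ M' : List (Fin n), M'.length + 1 = M.length ∧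
      ∀ x : E, R.wordProd M' x = R.wordProd M (R.sRefl v x) := by
  intro M
  induction M with
  | nil =>
      intro v h
      rw [R.wordProd_nil] at h
      exact absurd h (fun h => R.pos_neg_absurd (R.α_mem v) (R.isPos_alpha v) h)
  | cons i M₁ ih =>
      intro v h
      have hmem : R.wordProd M₁ (R.α v) ∈ R.Φ := R.wordProd_mem (R.α_mem v) M₁
      rcases R.isPos_or_neg hmem with hpos | hneg
      · have heq : R.wordProd M₁ (R.α v) = R.α i := by
          apply R.eq_alpha_of_pos_neg hmem hpos
          rwa [← R.wordProd_cons i M₁]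
        refine ⟨M₁, by simp, fun x => ?_⟩
        rw [R.wordProd_cons, R.wordProd_conj M₁ v i heq x, R.sRefl_sRefl]
      · obtain ⟨M₁', hlen, hM⟩ := ih v hneg
        refine ⟨i :: M₁', by simp [← hlen], fun x => ?_⟩
        rw [R.wordProd_cons, R.wordProd_cons, hM x]

end RootSystemBase
end Aux2
section Aux3
open Finset
variable {n d : ℕ}
local notation "E" => EuclideanSpace ℝ (Fin d)
namespace RootSystemBase
variable (R : RootSystemBase n d)

lemma coroot_coords_injR (a b : Fin n → ℝ)
    (h : ∑ i, a i • rsCoroot (R.α i) = ∑ i, b i • rsCoroot (R.α i)) : a = b := by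
  have h' : ∑ i, (a i * (2 / ⟪R.α i, R.α i⟫)) • R.α i
      = ∑ i, (b i * (2 / ⟪R.α i, R.α i⟫)) • R.α i := by
    simpa only [rsCoroot, smul_smul] using h
  have := R.coords_injR _ _ h'
  funext i
  have hi := congrFun this i
  have hne : (2 : ℝ) / ⟪R.α i, R.α i⟫ ≠ 0 :=
    div_ne_zero two_ne_zero (ne_of_gt (R.inner_alpha_pos i))
  exact mul_right_cancel₀ hne hi

lemma sRefl_coroot (v : Fin n) (γ : E) :
    rsCoroot (R.sRefl v γ) = R.sRefl v (rsCoroot γ) := by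
  unfold rsCoroot
  rw [inner_sRefl, map_smul]

/-- reflecting a coroot writes it in terms of the simple coroot -/
lemma sRefl_coroot_formula {γ : E} (hγγ : ⟪γ, γ⟫ ≠ 0) (v : Fin n) :
    R.sRefl v (rsCoroot γ) = rsCoroot γ - rsPair (R.α v) γ • rsCoroot (R.α v) := by
  rw [R.sRefl_apply']
  congr 1
  have hvv : ⟪R.α v, R.α v⟫ ≠ 0 := ne_of_gt (R.inner_alpha_pos v)
  unfold rsPair rsCoroot
  rw [smul_smul, real_inner_smul_left]
  congr 1
  rw [real_inner_comm γ (R.α v)]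
  field_simp

lemma coroot_int_aux : ∀ (H : ℕ) (γ : E) (c : Fin n → ℤ), γ ∈ R.Φ →
    γ = ∑ i, (c i : ℝ) • R.α i → (∀ i, 0 ≤ c i) → (∑ i, c i) ≤ (H : ℤ) →
    ∃ k : Fin n → ℤ, rsCoroot γ = ∑ i, (k i : ℝ) • rsCoroot (R.α i) := by
  intro H
  induction H with
  | zero =>
      intro γ c hγ hc hcn hsum
      exfalso
      apply R.nonzero γ hγ
      have hc0 : ∀ i, c i = 0 := by
        intro i
        have h1 := hcn i
        have h2 : ∑ i, c i ≤ 0 := by exact_mod_cast hsum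
        have h3 : c i ≤ ∑ i, c i := Finset.single_le_sum (fun i _ => hcn i) (Finset.mem_univ i)
        omega
      rw [hc]
      apply Finset.sum_eq_zero
      intro i _
      rw [hc0 i]; simp
  | succ H ih =>
      intro γ c hγ hc hcn hsum
      have hγ0 : γ ≠ 0 := R.nonzero γ hγ
      have hip : 0 < ⟪γ, γ⟫ := inner_self_pos' hγ0
      have hsum_inner : ⟪γ, γ⟫ = ∑ i, (c i : ℝ) * ⟪R.α i, γ⟫ := by
        nth_rewrite 1 [hc]
        rw [sum_inner]
        exact Finset.sum_congr rfl (fun i _ => real_inner_smul_left _ _ _)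
      have hex : ∃ i, 0 < (c i : ℝ) * ⟪R.α i, γ⟫ := by
        by_contra hcon
        push_neg at hcon
        have : ⟪γ, γ⟫ ≤ 0 := hsum_inner ▸ Finset.sum_nonpos (fun i _ => hcon i)
        linarith
      obtain ⟨i, hi⟩ := hex
      have hαγ : 0 < ⟪R.α i, γ⟫ := by
        rcases lt_or_ge 0 ⟪R.α i, γ⟫ with h | h
        · exact h
        · exfalso
          have h1 : (0:ℝ) ≤ (c i : ℝ) := by exact_mod_cast hcn i
          nlinarith
      obtain ⟨k, hk⟩ := R.crystallographic γ hγ _ (R.α_mem i)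
      have hkpos : 1 ≤ k := by
        have : (0:ℝ) < (k:ℝ) := by
          rw [← hk]
          unfold rsPair
          rw [← real_inner_comm (R.α i) γ] at hαγ
          have h2 := R.inner_alpha_pos i
          positivity
        exact_mod_cast this
      by_cases hEq : γ = R.α i
      · refine ⟨fun u => if u = i then 1 else 0, ?_⟩
        rw [hEq, Finset.sum_eq_single i (fun b _ hb => by simp [hb])
          (fun h => absurd (Finset.mem_univ i) h)]
        simp
      · set δ := R.sRefl i γ with hδ
        have hδΦ : δ ∈ R.Φ := R.sRefl_mem hγ i
        have hδpos : IsPos R δ := R.sRefl_pos hγ ⟨c, hc, hcn⟩ i hEq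
        obtain ⟨e, he, hen⟩ := hδpos
        have hrep : δ = ∑ u, ((fun u => c u - if u = i then k else 0) u : ℝ) • R.α u := by
          rw [hδ, R.sRefl_apply', hk, hc]
          push_cast
          simp only [sub_smul, Finset.sum_sub_distrib]
          congr 1
          rw [Finset.sum_eq_single i (fun b _ hb => by simp [hb])
            (fun h => absurd (Finset.mem_univ i) h)]
          simp
        have hce := R.coords_injZ _ _ (he.symm.trans hrep)
        have hesum : ∑ u, e u ≤ (H : ℤ) := by
          have h1 : ∑ u, e u = (∑ u, c u) - k := by
            rw [hce]
            rw [Finset.sum_sub_distrib]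
            congr 1
            rw [Finset.sum_eq_single i (fun b _ hb => by simp [hb])
              (fun h => absurd (Finset.mem_univ i) h)]
            simp
          push_cast at hsum ⊢
          omega
        obtain ⟨k', hk'⟩ := ih δ e hδΦ he hen hesum
        obtain ⟨p, hp⟩ := R.crystallographic _ (R.α_mem i) δ hδΦ
        have hγδ : γ = R.sRefl i δ := (R.sRefl_sRefl i γ).symm
        have hδδ : ⟪δ, δ⟫ ≠ 0 := ne_of_gt (inner_self_pos' (R.nonzero δ hδΦ))
        refine ⟨fun u => k' u - if u = i then p else 0, ?_⟩
        rw [hγδ, R.sRefl_coroot, R.sRefl_coroot_formula hδδ, hp, hk']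
        push_cast
        simp only [sub_smul, Finset.sum_sub_distrib]
        congr 1
        rw [Finset.sum_eq_single i (fun b _ hb => by simp [hb])
          (fun h => absurd (Finset.mem_univ i) h)]
        simp

/-- full coroot decomposition for positive roots -/
lemma coroot_decomp {γ : E} (hγ : γ ∈ R.Φ) (hp : IsPos R γ) :
    ∃ k : Fin n → ℤ, rsCoroot γ = ∑ i, (k i : ℝ) • rsCoroot (R.α i)
      ∧ (∀ i, 0 ≤ k i) ∧ 1 ≤ ∑ i, k i := by
  obtain ⟨c, hc, hcn⟩ := hp
  obtain ⟨k, hk⟩ := R.coroot_int_aux (∑ i, c i).toNat γ c hγ hc hcn (by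
    rw [Int.toNat_of_nonneg (Finset.sum_nonneg (fun i _ => hcn i))])
  have hγγ : 0 < ⟪γ, γ⟫ := inner_self_pos' (R.nonzero γ hγ)
  -- identify coefficients: (k i : ℝ) = c i * ⟪α i, α i⟫ / ⟪γ,γ⟫ ≥ 0
  have hrep2 : rsCoroot γ = ∑ i, ((c i : ℝ) * ⟪R.α i, R.α i⟫ / ⟪γ, γ⟫ * (2 / ⟪R.α i, R.α i⟫)) • R.α i := by
    unfold rsCoroot
    set G := ⟪γ, γ⟫ with hG
    have h2 : G ≠ 0 := ne_of_gt hγγ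
    rw [hc, Finset.smul_sum]
    refine Finset.sum_congr rfl (fun i _ => ?_)
    rw [smul_smul]
    congr 1
    have h1 : ⟪R.α i, R.α i⟫ ≠ 0 := ne_of_gt (R.inner_alpha_pos i)
    set A := ⟪R.α i, R.α i⟫ with hA
    field_simp
  have hrep2' : rsCoroot γ = ∑ i, ((c i : ℝ) * ⟪R.α i, R.α i⟫ / ⟪γ, γ⟫) • rsCoroot (R.α i) := by
    rw [hrep2]
    exact Finset.sum_congr rfl (fun i _ => by rw [rsCoroot, smul_smul])
  have hco := R.coroot_coords_injR _ _ (hk.symm.trans hrep2')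
  have hknn : ∀ i, 0 ≤ k i := by
    intro i
    have hi := congrFun hco i
    have : (0:ℝ) ≤ (k i : ℝ) := by
      rw [hi]
      have h1 : (0:ℝ) ≤ (c i : ℝ) := by exact_mod_cast hcn i
      have h2 := R.inner_alpha_pos i
      positivity
    exact_mod_cast this
  refine ⟨k, hk, hknn, ?_⟩
  have hkne : ∃ i, 1 ≤ k i := by
    by_contra hcon
    push_neg at hcon
    have hk0 : ∀ i, k i = 0 := fun i => by have := hknn i; have := hcon i; omega
    apply rsCoroot_ne_zero (R.nonzero γ hγ)
    rw [hk]
    apply Finset.sum_eq_zero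
    intro i _
    rw [hk0 i]; simp
  obtain ⟨i, hi⟩ := hkne
  calc (1:ℤ) ≤ k i := hi
    _ ≤ ∑ i, k i := Finset.single_le_sum (fun i _ => hknn i) (Finset.mem_univ i)

lemma dom_pair_nonneg {z γ : E} (hd : ∀ v, 0 ≤ rsPair z (R.α v)) (hγ : γ ∈ R.Φ)
    (hp : IsPos R γ) : 0 ≤ rsPair z γ := by
  obtain ⟨k, hk, hknn, -⟩ := R.coroot_decomp hγ hp
  rw [rsPair_eq_inner_coroot, hk, inner_sum]
  apply Finset.sum_nonneg
  intro i _
  rw [real_inner_smul_right]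
  have h1 : (0:ℝ) ≤ (k i : ℝ) := by exact_mod_cast hknn i
  have h2 : 0 ≤ ⟪z, rsCoroot (R.α i)⟫ := by
    rw [← rsPair_eq_inner_coroot]
    exact hd i
  positivity

end RootSystemBase
end Aux3
section Aux4
open Finset
variable {n d : ℕ}
local notation "E" => EuclideanSpace ℝ (Fin d)
namespace RootSystemBase
variable (R : RootSystemBase n d)

lemma unique_dom_aux : ∀ (N : ℕ) (L : List (Fin n)) (z : E), L.length ≤ N →
    (∀ v, 0 ≤ rsPair z (R.α v)) → (∀ v, 0 ≤ rsPair (R.wordProd L z) (R.α v)) →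
    R.wordProd L z = z := by
  intro N
  induction N with
  | zero =>
      intro L z hlen _ _
      have : L = [] := List.length_eq_zero_iff.mp (Nat.le_zero.mp hlen)
      rw [this, R.wordProd_nil]
  | succ N ih =>
      intro L z hlen hdz hdw
      rcases L.eq_nil_or_concat with rfl | ⟨M, v, rfl⟩
      · rw [R.wordProd_nil]
      · rw [List.concat_eq_append] at *
        have hwα : R.wordProd (M ++ [v]) (R.α v) ∈ R.Φ := R.wordProd_mem (R.α_mem v) _
        have hlenM : M.length ≤ N := by
          rw [List.length_append] at hlen; simpa using hlen
        rcases R.isPos_or_neg hwα with hpos | hneg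
        · -- deletion case
          have hMneg : IsPos R (-(R.wordProd M (R.α v))) := by
            have : R.wordProd (M ++ [v]) (R.α v) = -(R.wordProd M (R.α v)) := by
              rw [R.wordProd_concat, R.sRefl_alpha_self, map_neg]
            rwa [this] at hpos
          obtain ⟨M', hlen', hM'⟩ := R.deletion M v hMneg
          have hz : R.wordProd (M ++ [v]) z = R.wordProd M' z := by
            rw [hM' z, R.wordProd_concat]
          rw [hz] at hdw ⊢
          exact ih M' z (by omega) hdz hdw
        · -- fixed point case
          have hγ : -(R.wordProd (M ++ [v]) (R.α v)) ∈ R.Φ := R.neg_mem hwα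
          have h0 : rsPair z (R.α v) = 0 := by
            have h1 : 0 ≤ rsPair z (R.α v) := hdz v
            have h2 : rsPair z (R.α v)
                = rsPair (R.wordProd (M ++ [v]) z) (R.wordProd (M ++ [v]) (R.α v)) :=
              (R.rsPair_wordProd _ _ _).symm
            have h3 : rsPair (R.wordProd (M ++ [v]) z) (R.wordProd (M ++ [v]) (R.α v))
                = -rsPair (R.wordProd (M ++ [v]) z) (-(R.wordProd (M ++ [v]) (R.α v))) := by
              rw [rsPair_neg_right]; ring
            have h4 : 0 ≤ rsPair (R.wordProd (M ++ [v]) z) (-(R.wordProd (M ++ [v]) (R.α v))) := by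
              -- dominance against a positive root
              apply R.dom_pair_nonneg hdw hγ hneg
            linarith [h2, h3.symm, h4]
          have hfix : R.sRefl v z = z := by
            rw [R.sRefl_apply', h0, zero_smul, sub_zero]
          rw [R.wordProd_concat, hfix] at hdw ⊢
          exact ih M z hlenM hdz hdw


lemma unique_dom {L : List (Fin n)} {z : E}
    (hdz : ∀ v, 0 ≤ rsPair z (R.α v)) (hdw : ∀ v, 0 ≤ rsPair (R.wordProd L z) (R.α v)) :
    R.wordProd L z = z :=
  R.unique_dom_aux L.length L z le_rfl hdz hdw

end RootSystemBase
end Aux4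
section Aux5
open Finset
variable {n d : ℕ}
local notation "E" => EuclideanSpace ℝ (Fin d)
namespace RootSystemBase
variable (R : RootSystemBase n d)

lemma spanA_sRefl {x : E} (h : ∃ t : Fin n → ℝ, x = ∑ i, t i • R.α i) (v : Fin n) :
    ∃ t : Fin n → ℝ, R.sRefl v x = ∑ i, t i • R.α i := by
  obtain ⟨t, ht⟩ := h
  refine ⟨fun u => t u - if u = v then rsPair x (R.α v) else 0, ?_⟩
  rw [R.sRefl_apply']
  simp only [sub_smul, Finset.sum_sub_distrib, ← ht]
  congr 1
  rw [Finset.sum_eq_single v (fun b _ hb => by simp [hb])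
    (fun h => absurd (Finset.mem_univ v) h)]
  simp

lemma spanA_wordProd {x : E} (h : ∃ t : Fin n → ℝ, x = ∑ i, t i • R.α i) (l : List (Fin n)) :
    ∃ t : Fin n → ℝ, R.wordProd l x = ∑ i, t i • R.α i := by
  induction l with
  | nil => exact h
  | cons i l ih =>
      rw [wordProd_cons]
      exact R.spanA_sRefl ih i

lemma inner_nonneg_of_rsPair {x : E} {v : Fin n} (h : 0 ≤ rsPair x (R.α v)) :
    0 ≤ ⟪x, R.α v⟫ := by
  have hA := R.inner_alpha_pos v
  unfold rsPair at h
  by_contra hc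
  push_neg at hc
  have : 2 * ⟪x, R.α v⟫ / ⟪R.α v, R.α v⟫ < 0 := div_neg_of_neg_of_pos (by linarith) hA
  linarith

lemma dom_coords_nonneg (t : Fin n → ℝ)
    (hd : ∀ v, 0 ≤ rsPair (∑ i, t i • R.α i) (R.α v)) : ∀ v, 0 ≤ t v := by
  set u := ∑ i, t i • R.α i with hu
  have hinner : ∀ v, 0 ≤ ⟪u, R.α v⟫ := fun v => R.inner_nonneg_of_rsPair (hd v)
  set P := Finset.univ.filter (fun v => t v < 0) with hP
  set uneg := ∑ v ∈ P, (-(t v)) • R.α v with huneg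
  have h1 : 0 ≤ ⟪u, uneg⟫ := by
    rw [huneg, inner_sum]
    apply Finset.sum_nonneg
    intro v hv
    rw [real_inner_smul_right]
    have hv' : t v < 0 := (Finset.mem_filter.mp hv).2
    have := hinner v
    nlinarith
  set upos := ∑ v ∈ Finset.univ.filter (fun v => ¬ t v < 0), t v • R.α v with hupos
  have hsplit : u = upos - uneg := by
    rw [hu, hupos, huneg, ← Finset.sum_filter_add_sum_filter_not Finset.univ (fun v => t v < 0)
      (fun v => t v • R.α v)]
    simp only [neg_smul, Finset.sum_neg_distrib]
    abel
  have h3 : ⟪upos, uneg⟫ ≤ 0 := by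
    rw [hupos, sum_inner]
    apply Finset.sum_nonpos
    intro v hv
    rw [real_inner_smul_left, huneg, inner_sum]
    have hv' : ¬ t v < 0 := (Finset.mem_filter.mp hv).2
    have h4 : ∑ w ∈ P, ⟪R.α v, -t w • R.α w⟫ ≤ 0 := by
      apply Finset.sum_nonpos
      intro w hw
      rw [real_inner_smul_right]
      have hw' : t w < 0 := (Finset.mem_filter.mp hw).2
      have hvw : v ≠ w := fun h => hv' (h ▸ hw')
      have := R.inner_alpha_nonpos hvw
      nlinarith
    nlinarith
  have h5 : ⟪u, uneg⟫ = ⟪upos, uneg⟫ - ⟪uneg, uneg⟫ := by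
    rw [hsplit, inner_sub_left]
  have h6 : ⟪uneg, uneg⟫ = 0 := by
    have := real_inner_self_nonneg (x := uneg)
    linarith
  have h7 : uneg = 0 := inner_self_eq_zero.mp h6
  have h8 : ∑ i, (if t i < 0 then -(t i) else 0) • R.α i = ∑ i, (0:ℝ) • R.α i := by
    have : ∑ i, (if t i < 0 then -(t i) else 0) • R.α i = uneg := by
      rw [huneg, Finset.sum_filter]
      exact Finset.sum_congr rfl (fun i _ => by split_ifs <;> simp)
    rw [this, h7]
    simp
  have h9 := R.coords_injR _ _ h8
  intro v
  by_contra hc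
  push_neg at hc
  have := congrFun h9 v
  simp only [if_pos hc] at this
  linarith

lemma exists_dual (t : Fin n → ℝ) :
    ∃ c : Fin n → ℝ, ∀ v, ⟪∑ i, c i • R.α i, R.α v⟫ = t v := by
  let T : (Fin n → ℝ) →ₗ[ℝ] (Fin n → ℝ) := {
    toFun := fun c => fun v => ⟪∑ i, c i • R.α i, R.α v⟫
    map_add' := by
      intro a b
      funext v
      show ⟪∑ i, (a i + b i) • R.α i, R.α v⟫ = ⟪∑ i, a i • R.α i, R.α v⟫ + ⟪∑ i, b i • R.α i, R.α v⟫
      rw [← inner_add_left]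
      congr 1
      simp [add_smul, Finset.sum_add_distrib]
    map_smul' := by
      intro m a
      funext v
      show ⟪∑ i, (m * a i) • R.α i, R.α v⟫ = m * ⟪∑ i, a i • R.α i, R.α v⟫
      rw [← real_inner_smul_left]
      congr 1
      rw [Finset.smul_sum]
      exact Finset.sum_congr rfl (fun i _ => by rw [smul_smul])
  }
  have hker : ∀ c, T c = 0 → c = 0 := by
    intro c hc
    have hy : ⟪∑ i, c i • R.α i, ∑ i, c i • R.α i⟫ = 0 := by
      rw [inner_sum]
      apply Finset.sum_eq_zero
      intro v _
      rw [real_inner_smul_right]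
      have : ⟪∑ i, c i • R.α i, R.α v⟫ = 0 := congrFun hc v
      rw [this, mul_zero]
    have hy0 := inner_self_eq_zero.mp hy
    have := R.coords_injR c 0 (by rw [hy0]; simp)
    exact this
  have hinj : Function.Injective T := by
    intro a b hab
    have : T (a - b) = 0 := by rw [map_sub, hab, sub_self]
    have := hker _ this
    funext i
    have hi := congrFun this i
    simp only [Pi.sub_apply, Pi.zero_apply] at hi
    linarith
  obtain ⟨c, hc⟩ := LinearMap.injective_iff_surjective.mp hinj t
  exact ⟨c, fun v => congrFun hc v⟩

section Zeta

lemma rsPair_zeta (ζ : E) (hζ : ∀ v, ⟪ζ, R.α v⟫ = ⟪R.α v, R.α v⟫) (v : Fin n) : rsPair ζ (R.α v) = 2 := by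
  unfold rsPair
  rw [hζ v, mul_div_assoc, div_self (ne_of_gt (R.inner_alpha_pos v)), mul_one]

lemma zeta_pair_root (ζ : E) (hζ : ∀ v, ⟪ζ, R.α v⟫ = ⟪R.α v, R.α v⟫) {δ : E} (hδ : δ ∈ R.Φ) :
    ∃ q : ℤ, rsPair ζ δ = 2 * q ∧ q ≠ 0 ∧ (IsPos R δ → 1 ≤ q) ∧ (IsPos R (-δ) → q ≤ -1) := by
  have key : ∀ γ : E, γ ∈ R.Φ → IsPos R γ → ∃ q : ℤ, rsPair ζ γ = 2 * q ∧ 1 ≤ q := by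
    intro γ hγ hp
    obtain ⟨k, hk, hknn, hksum⟩ := R.coroot_decomp hγ hp
    refine ⟨∑ i, k i, ?_, hksum⟩
    rw [rsPair_eq_inner_coroot, hk, inner_sum]
    have : ∀ i, ⟪ζ, (k i : ℝ) • rsCoroot (R.α i)⟫ = 2 * (k i : ℝ) := by
      intro i
      rw [real_inner_smul_right]
      unfold rsCoroot
      rw [real_inner_smul_right, hζ i,
        div_mul_cancel₀ _ (ne_of_gt (R.inner_alpha_pos i))]
      ring
    rw [Finset.sum_congr rfl (fun i _ => this i)]
    rw [← Finset.mul_sum]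
    push_cast
    ring
  rcases R.isPos_or_neg hδ with hpos | hneg
  · obtain ⟨q, hq1, hq2⟩ := key δ hδ hpos
    exact ⟨q, hq1, by omega, fun _ => hq2,
      fun h => absurd h (fun h => R.pos_neg_absurd hδ hpos h)⟩
  · obtain ⟨q, hq1, hq2⟩ := key (-δ) (R.neg_mem hδ) hneg
    refine ⟨-q, ?_, by omega, ?_, fun _ => by omega⟩
    · rw [← neg_neg δ, rsPair_neg_right, hq1]
      push_cast
      ring
    · intro h
      exact absurd hneg (fun h2 => R.pos_neg_absurd hδ h h2)

lemma dom_orbit_eq (ζ : E) (hζ : ∀ v, ⟪ζ, R.α v⟫ = ⟪R.α v, R.α v⟫) (hζin : ∃ t : Fin n → ℝ, ζ = ∑ i, t i • R.α i)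
    (L : List (Fin n)) (hdom : ∀ v, 0 ≤ rsPair (R.wordProd L (-ζ)) (R.α v)) :
    R.wordProd L (-ζ) = ζ := by
  set y := R.wordProd L (-ζ) with hy
  have hpair2 : ∀ v, 2 ≤ rsPair y (R.α v) := by
    intro v
    have hδΦ : R.wordProd L.reverse (R.α v) ∈ R.Φ := R.wordProd_mem (R.α_mem v) _
    obtain ⟨q, hq1, hq2, -, -⟩ := R.zeta_pair_root ζ hζ hδΦ
    have hcan : R.wordProd L (R.wordProd L.reverse (R.α v)) = R.α v :=
      R.wordProd_cancel_reverse L _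
    have h2 : rsPair y (R.α v) = -(2 * q) := by
      rw [hy, ← hcan, rsPair_wordProd, rsPair_neg_left, hq1]
    have h3 := hdom v
    rw [h2] at h3 ⊢
    have hq3 : q ≤ -1 := by
      by_contra hcon
      push_neg at hcon
      have : 1 ≤ q := by omega
      have : (1:ℝ) ≤ (q:ℝ) := by exact_mod_cast this
      linarith
    have : (q:ℝ) ≤ -1 := by exact_mod_cast hq3
    linarith
  have hnorm : ⟪y, y⟫ = ⟪ζ, ζ⟫ := by
    rw [hy, inner_wordProd, inner_neg_neg]
  have hyin : ∃ t : Fin n → ℝ, y = ∑ i, t i • R.α i := by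
    apply R.spanA_wordProd _ L
    obtain ⟨t, ht⟩ := hζin
    exact ⟨fun i => -(t i), by rw [ht]; simp [neg_smul, Finset.sum_neg_distrib]⟩
  obtain ⟨ty, hty⟩ := hyin
  obtain ⟨tζ, htζ⟩ := hζin
  set u := y - ζ with hu
  have hut : u = ∑ i, (ty i - tζ i) • R.α i := by
    rw [hu, hty, htζ]
    simp [sub_smul, Finset.sum_sub_distrib]
  have hdu : ∀ v, 0 ≤ rsPair u (R.α v) := by
    intro v
    rw [hu, rsPair_sub_left]
    have h1 := hpair2 v
    have h2 := R.rsPair_zeta ζ hζ v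
    linarith
  have htnn : ∀ v, 0 ≤ ty v - tζ v := by
    apply R.dom_coords_nonneg
    intro v
    rw [← hut]
    exact hdu v
  have horth : ⟪u, y + ζ⟫ = 0 := by
    rw [hu, inner_sub_left, inner_add_right, inner_add_right]
    rw [real_inner_comm ζ y]
    linarith [hnorm]
  have hexp : ⟪u, y + ζ⟫ = ∑ v, (ty v - tζ v) * ⟪R.α v, y + ζ⟫ := by
    rw [hut, sum_inner]
    exact Finset.sum_congr rfl (fun v _ => real_inner_smul_left _ _ _)
  have hposf : ∀ v, 0 < ⟪R.α v, y + ζ⟫ := by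
    intro v
    rw [real_inner_comm, inner_add_left]
    have h1 : 0 ≤ ⟪y, R.α v⟫ := R.inner_nonneg_of_rsPair (by linarith [hpair2 v])
    have h2 : ⟪ζ, R.α v⟫ = ⟪R.α v, R.α v⟫ := hζ v
    have h3 := R.inner_alpha_pos v
    linarith
  have hzero : ∀ v ∈ Finset.univ, (ty v - tζ v) * ⟪R.α v, y + ζ⟫ = 0 := by
    rw [← Finset.sum_eq_zero_iff_of_nonneg]
    · rw [← hexp]; exact horth
    · intro v _
      have := htnn v
      have := le_of_lt (hposf v)
      positivity
  have ht0 : ∀ v, ty v - tζ v = 0 := by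
    intro v
    have := hzero v (Finset.mem_univ v)
    rcases mul_eq_zero.mp this with h | h
    · exact h
    · exact absurd h (ne_of_gt (hposf v))
  have : u = 0 := by
    rw [hut]
    apply Finset.sum_eq_zero
    intro v _
    rw [ht0 v]
    simp
  rw [hu] at this
  exact sub_eq_zero.mp this

lemma orbit_inner_le (ζ : E) (L : List (Fin n)) :
    ⟪R.wordProd L (-ζ), ζ⟫ ≤ ⟪ζ, ζ⟫ := by
  have h1 : ⟪R.wordProd L (-ζ), R.wordProd L (-ζ)⟫ = ⟪ζ, ζ⟫ := by
    rw [inner_wordProd, inner_neg_neg]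
  have h2 : ‖R.wordProd L (-ζ)‖ = ‖ζ‖ := by
    have := h1
    rw [real_inner_self_eq_norm_mul_norm, real_inner_self_eq_norm_mul_norm] at this
    exact (mul_self_inj (norm_nonneg _) (norm_nonneg _)).mp this
  calc ⟪R.wordProd L (-ζ), ζ⟫ ≤ ‖R.wordProd L (-ζ)‖ * ‖ζ‖ := real_inner_le_norm _ _
    _ = ‖ζ‖ * ‖ζ‖ := by rw [h2]
    _ = ⟪ζ, ζ⟫ := (real_inner_self_eq_norm_mul_norm ζ).symm

lemma exists_dom_word [Nonempty (Fin n)] (ζ : E)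
    (hζ : ∀ v, ⟪ζ, R.α v⟫ = ⟪R.α v, R.α v⟫) (hζin : ∃ t : Fin n → ℝ, ζ = ∑ i, t i • R.α i) :
    ∃ L : List (Fin n), R.wordProd L (-ζ) = ζ := by
  set m := Finset.univ.inf' Finset.univ_nonempty (fun v => ⟪R.α v, R.α v⟫) with hm
  have hmpos : 0 < m := Finset.lt_inf'_iff _ |>.mpr (fun v _ => R.inner_alpha_pos v)
  have aux : ∀ (k : ℕ) (L : List (Fin n)),
      ⟪ζ, ζ⟫ - ⟪R.wordProd L (-ζ), ζ⟫ ≤ k * (2 * m) →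
      ∃ L', ∀ v, 0 ≤ rsPair (R.wordProd L' (-ζ)) (R.α v) := by
    intro k
    induction k with
    | zero =>
        intro L hk
        by_cases hdom : ∀ v, 0 ≤ rsPair (R.wordProd L (-ζ)) (R.α v)
        · exact ⟨L, hdom⟩
        · exfalso
          push_neg at hdom
          obtain ⟨v, hv⟩ := hdom
          set y := R.wordProd L (-ζ) with hy
          have hδΦ : R.wordProd L.reverse (R.α v) ∈ R.Φ := R.wordProd_mem (R.α_mem v) _
          obtain ⟨q, hq1, hq2, -, -⟩ := R.zeta_pair_root ζ hζ hδΦ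
          have h2 : rsPair y (R.α v) = -(2 * q) := by
            rw [hy, ← R.wordProd_cancel_reverse L (R.α v), rsPair_wordProd, rsPair_neg_left, hq1]
          have hqge : 1 ≤ q := by
            rcases lt_or_ge q 0 with h | h
            · exfalso
              have : (q:ℝ) ≤ -1 := by exact_mod_cast (by omega : q ≤ -1)
              rw [h2] at hv
              linarith
            · omega
          have hple : rsPair y (R.α v) ≤ -2 := by
            rw [h2]
            have : (1:ℝ) ≤ (q:ℝ) := by exact_mod_cast hqge
            linarith
          have hinnery' : ⟪R.sRefl v y, ζ⟫ = ⟪y, ζ⟫ - rsPair y (R.α v) * ⟪R.α v, ζ⟫ := by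
            rw [R.sRefl_apply', inner_sub_left, real_inner_smul_left]
          have hαζ : ⟪R.α v, ζ⟫ = ⟪R.α v, R.α v⟫ := by
            rw [real_inner_comm]; exact hζ v
          have hmv : m ≤ ⟪R.α v, R.α v⟫ := Finset.inf'_le _ (Finset.mem_univ v)
          have hgain : ⟪y, ζ⟫ + 2 * m ≤ ⟪R.sRefl v y, ζ⟫ := by
            rw [hinnery', hαζ]
            nlinarith [R.inner_alpha_pos v]
          have hbound : ⟪R.sRefl v y, ζ⟫ ≤ ⟪ζ, ζ⟫ := by
            have : R.sRefl v y = R.wordProd (v :: L) (-ζ) := by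
              rw [R.wordProd_cons]
            rw [this]
            exact R.orbit_inner_le ζ (v :: L)
          simp only [Nat.cast_zero, zero_mul] at hk
          linarith
    | succ k ih =>
        intro L hk
        by_cases hdom : ∀ v, 0 ≤ rsPair (R.wordProd L (-ζ)) (R.α v)
        · exact ⟨L, hdom⟩
        · push_neg at hdom
          obtain ⟨v, hv⟩ := hdom
          set y := R.wordProd L (-ζ) with hy
          have hδΦ : R.wordProd L.reverse (R.α v) ∈ R.Φ := R.wordProd_mem (R.α_mem v) _
          obtain ⟨q, hq1, hq2, -, -⟩ := R.zeta_pair_root ζ hζ hδΦ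
          have h2 : rsPair y (R.α v) = -(2 * q) := by
            rw [hy, ← R.wordProd_cancel_reverse L (R.α v), rsPair_wordProd, rsPair_neg_left, hq1]
          have hqge : 1 ≤ q := by
            rcases lt_or_ge q 0 with h | h
            · exfalso
              have : (q:ℝ) ≤ -1 := by exact_mod_cast (by omega : q ≤ -1)
              rw [h2] at hv
              linarith
            · omega
          have hple : rsPair y (R.α v) ≤ -2 := by
            rw [h2]
            have : (1:ℝ) ≤ (q:ℝ) := by exact_mod_cast hqge
            linarith
          have hinnery' : ⟪R.sRefl v y, ζ⟫ = ⟪y, ζ⟫ - rsPair y (R.α v) * ⟪R.α v, ζ⟫ := by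
            rw [R.sRefl_apply', inner_sub_left, real_inner_smul_left]
          have hαζ : ⟪R.α v, ζ⟫ = ⟪R.α v, R.α v⟫ := by
            rw [real_inner_comm]; exact hζ v
          have hmv : m ≤ ⟪R.α v, R.α v⟫ := Finset.inf'_le _ (Finset.mem_univ v)
          have hgain : ⟪y, ζ⟫ + 2 * m ≤ ⟪R.sRefl v y, ζ⟫ := by
            rw [hinnery', hαζ]
            nlinarith [R.inner_alpha_pos v]
          apply ih (v :: L)
          have hcons : R.wordProd (v :: L) (-ζ) = R.sRefl v y := by
            rw [R.wordProd_cons, hy]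
          rw [hcons]
          push_cast at hk ⊢
          linarith
  obtain ⟨L', hdom⟩ := aux (⌈(2 * ⟪ζ, ζ⟫) / (2 * m)⌉₊) []
    (by
      have h1 : ⟪R.wordProd [] (-ζ), ζ⟫ = -⟪ζ, ζ⟫ := by
        rw [R.wordProd_nil, inner_neg_left]
      rw [h1]
      have h2 : (2 * ⟪ζ, ζ⟫) / (2 * m) ≤ (⌈(2 * ⟪ζ, ζ⟫) / (2 * m)⌉₊ : ℝ) := Nat.le_ceil _
      have h3 : 0 < 2 * m := by linarith
      calc ⟪ζ, ζ⟫ - -⟪ζ, ζ⟫ = 2 * ⟪ζ, ζ⟫ := by ring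
        _ = ((2 * ⟪ζ, ζ⟫) / (2 * m)) * (2 * m) := by field_simp
        _ ≤ (⌈(2 * ⟪ζ, ζ⟫) / (2 * m)⌉₊ : ℝ) * (2 * m) := by
            apply mul_le_mul_of_nonneg_right h2 (le_of_lt h3))
  exact ⟨L', R.dom_orbit_eq ζ hζ hζin L' hdom⟩

end Zeta
end RootSystemBase
end Aux5
section Aux6
open Finset
variable {n d : ℕ}
local notation "E" => EuclideanSpace ℝ (Fin d)

/-- sum of all positive coroots -/
def rho2 (R : RootSystemBase n d) : E := ∑ γ ∈ R.posRoots, rsCoroot γ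

namespace RootSystemBase
variable (R : RootSystemBase n d)

lemma mem_posRoots {β : E} : β ∈ R.posRoots ↔ β ∈ R.Φ ∧ IsPos R β := Finset.mem_filter

lemma alpha_mem_posRoots (v : Fin n) : R.α v ∈ R.posRoots :=
  R.mem_posRoots.mpr ⟨R.α_mem v, R.isPos_alpha v⟩

lemma sRefl_ne_alpha {γ : E} {v : Fin n} (hγ : γ ∈ R.Φ) (hp : IsPos R γ) :
    R.sRefl v γ ≠ R.α v := by
  intro h
  have hγeq : γ = -R.α v := by
    have := congrArg (R.sRefl v) h
    rw [R.sRefl_sRefl, R.sRefl_alpha_self] at this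
    exact this
  apply R.pos_neg_absurd (R.α_mem v) (R.isPos_alpha v)
  rw [← hγeq]
  exact hp

lemma sRefl_perm_sum (v : Fin n) :
    ∑ γ ∈ R.posRoots.erase (R.α v), rsCoroot (R.sRefl v γ)
      = ∑ γ ∈ R.posRoots.erase (R.α v), rsCoroot γ := by
  apply Finset.sum_nbij' (fun γ => R.sRefl v γ) (fun γ => R.sRefl v γ)
  · intro γ hγ
    obtain ⟨hne, hmem⟩ := Finset.mem_erase.mp hγ
    obtain ⟨hΦ, hpos⟩ := R.mem_posRoots.mp hmem
    refine Finset.mem_erase.mpr ⟨R.sRefl_ne_alpha hΦ hpos, ?_⟩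
    exact R.mem_posRoots.mpr ⟨R.sRefl_mem hΦ v, R.sRefl_pos hΦ hpos v hne⟩
  · intro γ hγ
    obtain ⟨hne, hmem⟩ := Finset.mem_erase.mp hγ
    obtain ⟨hΦ, hpos⟩ := R.mem_posRoots.mp hmem
    refine Finset.mem_erase.mpr ⟨R.sRefl_ne_alpha hΦ hpos, ?_⟩
    exact R.mem_posRoots.mpr ⟨R.sRefl_mem hΦ v, R.sRefl_pos hΦ hpos v hne⟩
  · intro γ _; exact R.sRefl_sRefl v γ
  · intro γ _; exact R.sRefl_sRefl v γ
  · intro γ _; rfl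

lemma sRefl_rho2 (v : Fin n) :
    R.sRefl v (rho2 R) = rho2 R - (2:ℝ) • rsCoroot (R.α v) := by
  have hsplit : rho2 R = rsCoroot (R.α v) + ∑ γ ∈ R.posRoots.erase (R.α v), rsCoroot γ :=
    (Finset.add_sum_erase _ _ (R.alpha_mem_posRoots v)).symm
  have h1 : R.sRefl v (rho2 R)
      = R.sRefl v (rsCoroot (R.α v)) + ∑ γ ∈ R.posRoots.erase (R.α v), R.sRefl v (rsCoroot γ) := by
    rw [hsplit, map_add, map_sum]
  rw [h1]
  have h2 : R.sRefl v (rsCoroot (R.α v)) = -rsCoroot (R.α v) := by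
    rw [← R.sRefl_coroot, R.sRefl_alpha_self, rsCoroot_neg]
  have h3 : ∑ γ ∈ R.posRoots.erase (R.α v), R.sRefl v (rsCoroot γ)
      = ∑ γ ∈ R.posRoots.erase (R.α v), rsCoroot γ := by
    rw [← R.sRefl_perm_sum v]
    exact Finset.sum_congr rfl (fun γ _ => (R.sRefl_coroot v γ).symm)
  rw [h2, h3, hsplit]
  module

lemma inner_alpha_rho2 (v : Fin n) : ⟪R.α v, rho2 R⟫ = 2 := by
  have h1 := R.sRefl_rho2 v
  rw [R.sRefl_apply'] at h1
  have h2 : rsPair (rho2 R) (R.α v) • R.α v = (2:ℝ) • rsCoroot (R.α v) := sub_right_inj.mp h1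
  have hAne : ⟪R.α v, R.α v⟫ ≠ 0 := ne_of_gt (R.inner_alpha_pos v)
  rw [rsCoroot, smul_smul] at h2
  have h3 : (rsPair (rho2 R) (R.α v) - 2 * (2 / ⟪R.α v, R.α v⟫)) • R.α v = 0 := by
    rw [sub_smul, h2, sub_self]
  rcases smul_eq_zero.mp h3 with h4 | h4
  · have h5 : rsPair (rho2 R) (R.α v) = 2 * (2 / ⟪R.α v, R.α v⟫) := sub_eq_zero.mp h4
    unfold rsPair at h5
    rw [real_inner_comm (rho2 R) (R.α v)]
    set A := ⟪R.α v, R.α v⟫ with hAdef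
    set X := ⟪rho2 R, R.α v⟫ with hXdef
    field_simp at h5
    linarith
  · exact absurd h4 (R.alpha_ne_zero v)

lemma maps_pos_neg (ζ : E) (hζ : ∀ v, ⟪ζ, R.α v⟫ = ⟪R.α v, R.α v⟫)
    (L : List (Fin n)) (hrev : R.wordProd L.reverse ζ = -ζ) {γ : E}
    (hγ : γ ∈ R.Φ) (hp : IsPos R γ) : IsPos R (-(R.wordProd L γ)) := by
  have hδΦ : R.wordProd L γ ∈ R.Φ := R.wordProd_mem hγ L
  rcases R.isPos_or_neg hδΦ with hpos | hneg
  · exfalso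
    obtain ⟨q, hq1, -, hq3, -⟩ := R.zeta_pair_root ζ hζ hδΦ
    obtain ⟨p, hp1, -, hp3, -⟩ := R.zeta_pair_root ζ hζ hγ
    have key : rsPair ζ (R.wordProd L γ) = -rsPair ζ γ := by
      calc rsPair ζ (R.wordProd L γ)
          = rsPair (R.wordProd L.reverse ζ) (R.wordProd L.reverse (R.wordProd L γ)) :=
            (R.rsPair_wordProd _ _ _).symm
        _ = rsPair (-ζ) γ := by rw [hrev, R.wordProd_reverse_cancel]
        _ = -rsPair ζ γ := rsPair_neg_left _ _
    have hq' := hq3 hpos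
    have hp' := hp3 hp
    rw [hq1, hp1] at key
    have hq'' : (1:ℝ) ≤ (q:ℝ) := by exact_mod_cast hq'
    have hp'' : (1:ℝ) ≤ (p:ℝ) := by exact_mod_cast hp'
    nlinarith
  · exact hneg

lemma w0_zeta_rev (ζ : E) (L₀ : List (Fin n)) (h : R.wordProd L₀ (-ζ) = ζ) :
    R.wordProd L₀.reverse ζ = -ζ := by
  have := R.wordProd_reverse_cancel L₀ (-ζ)
  rwa [h] at this

lemma w0_zeta_fwd (ζ : E) (L₀ : List (Fin n)) (h : R.wordProd L₀ (-ζ) = ζ) :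
    R.wordProd L₀ ζ = -ζ := by
  have h' := h
  rw [map_neg] at h'
  exact neg_eq_iff_eq_neg.mp h'

lemma w0_rho2 (ζ : E) (hζ : ∀ v, ⟪ζ, R.α v⟫ = ⟪R.α v, R.α v⟫)
    (L₀ : List (Fin n)) (h : R.wordProd L₀ (-ζ) = ζ) :
    R.wordProd L₀.reverse (rho2 R) = -(rho2 R) := by
  have hrev : R.wordProd L₀.reverse ζ = -ζ := R.w0_zeta_rev ζ L₀ h
  have hfwd : R.wordProd (L₀.reverse).reverse ζ = -ζ := by
    rw [List.reverse_reverse]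
    exact R.w0_zeta_fwd ζ L₀ h
  unfold rho2
  rw [map_sum]
  have step : ∀ γ ∈ R.posRoots,
      R.wordProd L₀.reverse (rsCoroot γ) = -(rsCoroot (-(R.wordProd L₀.reverse γ))) := by
    intro γ _
    rw [← R.rsCoroot_wordProd, rsCoroot_neg, neg_neg]
  rw [Finset.sum_congr rfl step, Finset.sum_neg_distrib]
  congr 1
  apply Finset.sum_nbij' (fun γ => -(R.wordProd L₀.reverse γ)) (fun δ => -(R.wordProd L₀ δ))
  · intro γ hγ
    obtain ⟨hΦ, hpos⟩ := R.mem_posRoots.mp hγ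
    exact R.mem_posRoots.mpr ⟨R.neg_mem (R.wordProd_mem hΦ _),
      R.maps_pos_neg ζ hζ L₀.reverse hfwd hΦ hpos⟩
  · intro δ hδ
    obtain ⟨hΦ, hpos⟩ := R.mem_posRoots.mp hδ
    exact R.mem_posRoots.mpr ⟨R.neg_mem (R.wordProd_mem hΦ _),
      R.maps_pos_neg ζ hζ L₀ hrev hΦ hpos⟩
  · intro γ _
    rw [map_neg, neg_neg, R.wordProd_cancel_reverse]
  · intro δ _
    rw [map_neg, neg_neg, R.wordProd_reverse_cancel]
  · intro γ _; rfl

end RootSystemBase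
end Aux6
section Aux7
open Finset
variable {n d : ℕ}
local notation "E" => EuclideanSpace ℝ (Fin d)

/-- configuration vector shifted by the fundamental weight -/
def zc (R : RootSystemBase n d) (ω : E) (c : Fin n → ℤ) : E :=
  (∑ v, (c v : ℝ) • R.α v) - ω

namespace RootSystemBase
variable (R : RootSystemBase n d) (j : Fin n)

lemma cartan_diag_real (v : Fin n) : ((R.cartan v v : ℤ) : ℝ) = 2 := by
  rw [R.cartan_real]
  exact rsPair_self (R.alpha_ne_zero v)

lemma pair_zc (ω : EuclideanSpace ℝ (Fin d)) (hω : ∀ v, rsPair ω (R.α v) = if v = j then 1 else 0) (c : Fin n → ℤ) (v : Fin n) :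
    rsPair (zc R ω c) (R.α v) = ((2 * c v - R.chipBound {j} c v : ℤ) : ℝ) := by
  have e1 : rsPair (zc R ω c) (R.α v)
      = (∑ u, (c u : ℝ) * ((R.cartan u v : ℤ) : ℝ)) - (if v = j then (1:ℝ) else 0) := by
    show corootForm (R.α v) (zc R ω c) = _
    unfold zc
    rw [map_sub, map_sum]
    congr 1
    · refine Finset.sum_congr rfl (fun u _ => ?_)
      rw [map_smul, smul_eq_mul, R.cartan_real]
      rfl
    · rw [← hω v]; rfl
  have e2 : ((R.chipBound {j} c v : ℤ) : ℝ)
      = -(∑ u ∈ Finset.univ.erase v, (c u : ℝ) * ((R.cartan u v : ℤ) : ℝ))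
        + (if v = j then (1:ℝ) else 0) := by
    unfold chipBound
    push_cast [Finset.mem_singleton]
    rw [← Finset.sum_neg_distrib]
    congr 1
    exact Finset.sum_congr rfl (fun u _ => by ring)
  rw [e1]
  have e3 : ∑ u, (c u : ℝ) * ((R.cartan u v : ℤ) : ℝ)
      = (c v : ℝ) * ((R.cartan v v : ℤ) : ℝ)
        + ∑ u ∈ Finset.univ.erase v, (c u : ℝ) * ((R.cartan u v : ℤ) : ℝ) :=
    (Finset.add_sum_erase _ _ (Finset.mem_univ v)).symm
  push_cast [e2, e3, R.cartan_diag_real v]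
  ring

lemma sad_iff (ω : EuclideanSpace ℝ (Fin d)) (hω : ∀ v, rsPair ω (R.α v) = if v = j then 1 else 0) (c : Fin n → ℤ) (v : Fin n) :
    R.Sad {j} c v ↔ rsPair (zc R ω c) (R.α v) ≤ -1 := by
  rw [R.pair_zc j ω hω c v]
  unfold Sad
  have : ((2 * c v - R.chipBound {j} c v : ℤ) : ℝ) ≤ -1
      ↔ (2 * c v - R.chipBound {j} c v : ℤ) ≤ -1 := by exact_mod_cast Iff.rfl
  rw [this]
  omega

lemma notSad_iff (ω : EuclideanSpace ℝ (Fin d)) (hω : ∀ v, rsPair ω (R.α v) = if v = j then 1 else 0) (c : Fin n → ℤ) (v : Fin n) :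
    ¬ R.Sad {j} c v ↔ 0 ≤ rsPair (zc R ω c) (R.α v) := by
  rw [R.pair_zc j ω hω c v]
  unfold Sad
  have : (0:ℝ) ≤ ((2 * c v - R.chipBound {j} c v : ℤ) : ℝ)
      ↔ (0:ℤ) ≤ (2 * c v - R.chipBound {j} c v : ℤ) := by exact_mod_cast Iff.rfl
  rw [this]
  omega

lemma zc_fire (ω : EuclideanSpace ℝ (Fin d)) (hω : ∀ v, rsPair ω (R.α v) = if v = j then 1 else 0) (c : Fin n → ℤ) (v : Fin n) :
    zc R ω (R.fire {j} c v) = R.sRefl v (zc R ω c) := by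
  unfold fire
  have key : ∑ u, ((Function.update c v (R.chipBound {j} c v - c v) u : ℤ) : ℝ) • R.α u
      = (∑ u, (c u : ℝ) • R.α u)
        + ((R.chipBound {j} c v - 2 * c v : ℤ) : ℝ) • R.α v := by
    rw [← Finset.add_sum_erase _ _ (Finset.mem_univ v),
      ← Finset.add_sum_erase _ (fun u => (c u : ℝ) • R.α u) (Finset.mem_univ v)]
    rw [Function.update_self]
    have herase : ∑ u ∈ Finset.univ.erase v,
        ((Function.update c v (R.chipBound {j} c v - c v) u : ℤ) : ℝ) • R.α u
        = ∑ u ∈ Finset.univ.erase v, (c u : ℝ) • R.α u := by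
      refine Finset.sum_congr rfl (fun u hu => ?_)
      rw [Function.update_of_ne (Finset.mem_erase.mp hu).1]
    rw [herase]
    push_cast
    module
  show (∑ u, ((Function.update c v (R.chipBound {j} c v - c v) u : ℤ) : ℝ) • R.α u) - ω = _
  rw [key, R.sRefl_apply', R.pair_zc j ω hω c v]
  show _ = (zc R ω c) - _
  unfold zc
  push_cast
  module

lemma play_zc (ω : EuclideanSpace ℝ (Fin d)) (hω : ∀ v, rsPair ω (R.α v) = if v = j then 1 else 0) :
    ∀ (l : List (Fin n)) (c : Fin n → ℤ),
      zc R ω (List.foldl (R.fire {j}) c l) = R.wordProd l.reverse (zc R ω c) := by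
  intro l
  induction l with
  | nil => intro c; rw [List.foldl_nil, List.reverse_nil, R.wordProd_nil]
  | cons v l ih =>
      intro c
      rw [List.foldl_cons, ih (R.fire {j} c v), R.zc_fire j ω hω c v, List.reverse_cons,
        R.wordProd_concat]

lemma zc_zero (ω : EuclideanSpace ℝ (Fin d)) : zc R ω 0 = -ω := by
  unfold zc
  have : ∑ v, ((0 : Fin n → ℤ) v : ℝ) • R.α v = 0 := by
    apply Finset.sum_eq_zero
    intro v _
    simp
  rw [this, zero_sub]

lemma validFrom_append : ∀ (l : List (Fin n)) (c : Fin n → ℤ) (v : Fin n),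
    R.ValidFrom {j} c (l ++ [v])
      ↔ R.ValidFrom {j} c l ∧ R.Sad {j} (List.foldl (R.fire {j}) c l) v := by
  intro l
  induction l with
  | nil =>
      intro c v
      simp [ValidFrom]
  | cons u l ih =>
      intro c v
      show (R.Sad {j} c u ∧ R.ValidFrom {j} (R.fire {j} c u) (l ++ [v])) ↔ _
      rw [ih (R.fire {j} c u) v]
      rw [List.foldl_cons]
      show _ ↔ (R.Sad {j} c u ∧ R.ValidFrom {j} (R.fire {j} c u) l) ∧ _
      tauto

lemma valid_pot (ω : EuclideanSpace ℝ (Fin d)) (hω : ∀ v, rsPair ω (R.α v) = if v = j then 1 else 0)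
    (ζ : E) (hζ : ∀ v, ⟪ζ, R.α v⟫ = ⟪R.α v, R.α v⟫)
    (m : ℝ) (hm : ∀ v, m ≤ ⟪R.α v, R.α v⟫) :
    ∀ (l : List (Fin n)) (c : Fin n → ℤ), R.ValidFrom {j} c l →
      ⟪zc R ω c, ζ⟫ + l.length * m ≤ ⟪zc R ω (List.foldl (R.fire {j}) c l), ζ⟫ := by
  intro l
  induction l with
  | nil => intro c _; simp
  | cons v l ih =>
      intro c hval
      obtain ⟨hsad, hrest⟩ := hval
      have step : ⟪zc R ω c, ζ⟫ + m ≤ ⟪zc R ω (R.fire {j} c v), ζ⟫ := by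
        rw [R.zc_fire j ω hω c v, R.sRefl_apply', inner_sub_left, real_inner_smul_left]
        have hp : rsPair (zc R ω c) (R.α v) ≤ -1 := (R.sad_iff j ω hω c v).mp hsad
        have hαζ : ⟪R.α v, ζ⟫ = ⟪R.α v, R.α v⟫ := by
          rw [real_inner_comm]; exact hζ v
        have h1 := hm v
        have h2 := R.inner_alpha_pos v
        nlinarith
      have := ih (R.fire {j} c v) hrest
      rw [List.foldl_cons, List.length_cons]
      push_cast
      push_cast at this
      linarith

lemma inner_wordProd_le (L : List (Fin n)) (x y : E) :
    ⟪R.wordProd L x, y⟫ ≤ ‖x‖ * ‖y‖ := by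
  have h1 : ⟪R.wordProd L x, R.wordProd L x⟫ = ⟪x, x⟫ := R.inner_wordProd L x x
  have h2 : ‖R.wordProd L x‖ = ‖x‖ := by
    rw [real_inner_self_eq_norm_mul_norm, real_inner_self_eq_norm_mul_norm] at h1
    exact (mul_self_inj (norm_nonneg _) (norm_nonneg _)).mp h1
  calc ⟪R.wordProd L x, y⟫ ≤ ‖R.wordProd L x‖ * ‖y‖ := real_inner_le_norm _ _
    _ = ‖x‖ * ‖y‖ := by rw [h2]

lemma corootCoeffs_spec {x : E} (h : ∃ k : Fin n → ℤ, x = ∑ i, (k i : ℝ) • rsCoroot (R.α i)) :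
    x = ∑ i, ((R.corootCoeffs x i : ℤ) : ℝ) • rsCoroot (R.α i) := by
  unfold corootCoeffs
  rw [dif_pos h]
  exact h.choose_spec

lemma corootCoeffs_unique {x : E} {k : Fin n → ℤ}
    (hk : x = ∑ i, (k i : ℝ) • rsCoroot (R.α i)) : R.corootCoeffs x = k := by
  have hspec := R.corootCoeffs_spec ⟨k, hk⟩
  have := R.coroot_coords_injR (fun i => ((R.corootCoeffs x i : ℤ) : ℝ))
    (fun i => (k i : ℝ)) (by rw [← hspec, ← hk])
  funext i
  have hi := congrFun this i
  exact_mod_cast hi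

lemma omega_coroot_inner (ω : EuclideanSpace ℝ (Fin d)) (hω : ∀ v, rsPair ω (R.α v) = if v = j then 1 else 0)
    {γ : E} {k : Fin n → ℤ} (hk : rsCoroot γ = ∑ i, (k i : ℝ) • rsCoroot (R.α i)) :
    ⟪ω, rsCoroot γ⟫ = (k j : ℝ) := by
  rw [hk, inner_sum]
  have hterm : ∀ i, ⟪ω, (k i : ℝ) • rsCoroot (R.α i)⟫ = (k i : ℝ) * (if i = j then 1 else 0) := by
    intro i
    rw [real_inner_smul_right]
    congr 1
    rw [rsCoroot, real_inner_smul_right]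
    rw [← hω i]
    unfold rsPair
    ring
  rw [Finset.sum_congr rfl (fun i _ => hterm i)]
  rw [Finset.sum_eq_single j (fun b _ hb => by simp [hb]) (fun h => absurd (Finset.mem_univ j) h)]
  simp

lemma span_coroot_coeff_zero {γ : E} {k : Fin n → ℤ}
    (hk : rsCoroot γ = ∑ i, (k i : ℝ) • rsCoroot (R.α i))
    (hs : rsCoroot γ ∈ Submodule.span ℝ ((fun i => rsCoroot (R.α i)) '' {i : Fin n | i ≠ j})) :
    k j = 0 := by
  rw [Set.image_eq_range] at hs
  obtain ⟨c, hc⟩ := (Submodule.mem_span_range_iff_exists_fun ℝ).mp hs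
  have hfull : ∑ i, (if h : i ≠ j then c ⟨i, h⟩ else 0) • rsCoroot (R.α i) = rsCoroot γ := by
    rw [← hc]
    rw [← Finset.sum_filter_add_sum_filter_not Finset.univ (fun i => i ≠ j)
      (fun i => (if h : i ≠ j then c ⟨i, h⟩ else 0) • rsCoroot (R.α i))]
    have hz : ∑ i ∈ Finset.univ.filter (fun i => ¬ i ≠ j),
        (if h : i ≠ j then c ⟨i, h⟩ else 0) • rsCoroot (R.α i) = 0 := by
      apply Finset.sum_eq_zero
      intro i hi
      have hij : ¬ i ≠ j := (Finset.mem_filter.mp hi).2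
      rw [dif_neg hij, zero_smul]
    rw [hz, add_zero]
    rw [Finset.sum_subtype (Finset.univ.filter (fun i => i ≠ j))
      (p := fun i => i ∈ ({i : Fin n | i ≠ j} : Set (Fin n)))
      (by intro x; simp [Set.mem_setOf_eq])
      (fun i => (if h : i ≠ j then c ⟨i, h⟩ else 0) • rsCoroot (R.α i))]
    refine Finset.sum_congr rfl (fun a _ => ?_)
    have ha : (a : Fin n) ≠ j := a.prop
    rw [dif_pos ha]
  have heq := R.coroot_coords_injR (fun i => (k i : ℝ))
    (fun i => if h : i ≠ j then c ⟨i, h⟩ else 0) (by rw [← hk, ← hfull])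
  have hj := congrFun heq j
  have hj' : (k j : ℝ) = 0 := by simpa using hj
  exact_mod_cast hj'

end RootSystemBase
end Aux7

/-- For a single modified vertex `I = {j}`, the total number of chips of the
unique final configuration equals the sum, over all positive coroots not lying in the coroot
subsystem generated by `{α_i^∨ : i ≠ j}`, of the coefficient of `α_j^∨`. -/
theorem statement6 {n d : ℕ} (R : RootSystemBase n d) (j : Fin n) :
    (∃ N : ℕ, ∀ l : List (Fin n), R.Valid {j} l → l.length ≤ N) ∧
    ∃ cfin : Fin n → ℤ,
      (∃ l : List (Fin n), R.MaximalSeq {j} l) ∧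
      (∀ l : List (Fin n), R.MaximalSeq {j} l → R.play {j} l = cfin) ∧
      ∑ v, cfin v =
        ∑ γ ∈ R.posRoots.filter (fun γ => rsCoroot γ ∉
            Submodule.span ℝ ((fun i => rsCoroot (R.α i)) '' {i : Fin n | i ≠ j})),
          R.corootCoeffs (rsCoroot γ) j := by
  classical
  haveI : Nonempty (Fin n) := ⟨j⟩
  obtain ⟨cζ, hcζ⟩ := R.exists_dual (fun v => ⟪R.α v, R.α v⟫)
  set ζ : EuclideanSpace ℝ (Fin d) := ∑ i, cζ i • R.α i with hζdef
  have hζ : ∀ v, ⟪ζ, R.α v⟫ = ⟪R.α v, R.α v⟫ := fun v => hcζ v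
  have hζin : ∃ t : Fin n → ℝ, ζ = ∑ i, t i • R.α i := ⟨cζ, rfl⟩
  obtain ⟨cω, hcω⟩ := R.exists_dual (fun v => if v = j then ⟪R.α j, R.α j⟫ / 2 else 0)
  set ω : EuclideanSpace ℝ (Fin d) := ∑ i, cω i • R.α i with hωdef
  have hω : ∀ v, rsPair ω (R.α v) = if v = j then 1 else 0 := by
    intro v
    unfold rsPair
    rw [hcω v]
    split_ifs with h
    · rw [h]
      set A := ⟪R.α j, R.α j⟫ with hA
      have hAne : A ≠ 0 := ne_of_gt (R.inner_alpha_pos j)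
      field_simp
    · simp
  set m : ℝ := Finset.univ.inf' Finset.univ_nonempty (fun v => ⟪R.α v, R.α v⟫) with hmdef
  have hmle : ∀ v, m ≤ ⟪R.α v, R.α v⟫ := fun v => Finset.inf'_le _ (Finset.mem_univ v)
  have hmpos : 0 < m := Finset.lt_inf'_iff _ |>.mpr (fun v _ => R.inner_alpha_pos v)
  set B : ℝ := ‖ω‖ * ‖ζ‖ + ⟪ω, ζ⟫ with hBdef
  set N : ℕ := ⌈B / m⌉₊ with hNdef
  have hbound : ∀ l : List (Fin n), R.Valid {j} l → l.length ≤ N := by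
    intro l hl
    have h1 := R.valid_pot j ω hω ζ hζ m hmle l 0 hl
    have h2 : zc R ω 0 = -ω := R.zc_zero ω
    have h3 : zc R ω (List.foldl (R.fire {j}) 0 l) = R.wordProd l.reverse (-ω) := by
      rw [R.play_zc j ω hω l 0, h2]
    rw [h2, h3, inner_neg_left] at h1
    have h4 : ⟪R.wordProd l.reverse (-ω), ζ⟫ ≤ ‖-ω‖ * ‖ζ‖ := R.inner_wordProd_le _ _ _
    rw [norm_neg] at h4
    have h5 : (l.length : ℝ) * m ≤ B := by rw [hBdef]; linarith
    have h6 : (l.length : ℝ) ≤ B / m := (le_div_iff₀ hmpos).mpr h5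
    have h7 : (l.length : ℝ) ≤ (N : ℝ) := h6.trans (Nat.le_ceil _)
    exact_mod_cast h7
  refine ⟨⟨N, hbound⟩, ?_⟩
  set Pk : ℕ → Prop := fun k => ∃ l : List (Fin n), R.Valid {j} l ∧ l.length = k with hPkdef
  have hP0 : Pk 0 := ⟨[], by simp [RootSystemBase.Valid, RootSystemBase.ValidFrom], rfl⟩
  set K := Nat.findGreatest Pk N with hK
  have hPK : Pk K := Nat.findGreatest_spec (Nat.zero_le N) hP0
  obtain ⟨l₀, hl₀v, hl₀len⟩ := hPK
  have hl₀max : R.MaximalSeq {j} l₀ := by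
    refine ⟨hl₀v, fun v hsad => ?_⟩
    have hval' : R.Valid {j} (l₀ ++ [v]) := by
      show R.ValidFrom {j} 0 (l₀ ++ [v])
      rw [R.validFrom_append j l₀ 0 v]
      exact ⟨hl₀v, hsad⟩
    have hlen' : (l₀ ++ [v]).length ≤ N := hbound _ hval'
    rw [List.length_append, hl₀len] at hlen'
    have hnot : ¬ Pk (K + 1) :=
      Nat.findGreatest_is_greatest (by rw [← hK]; omega) (by simpa using hlen')
    exact hnot ⟨l₀ ++ [v], hval', by simp [hl₀len]⟩
  obtain ⟨L₀, hL₀⟩ := R.exists_dom_word ζ hζ hζin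
  have hfwdrev : R.wordProd (L₀.reverse).reverse ζ = -ζ := by
    rw [List.reverse_reverse]
    exact R.w0_zeta_fwd ζ L₀ hL₀
  set cfin := R.play {j} l₀ with hcfindef
  have hdomfin : ∀ l, R.MaximalSeq {j} l → (∀ v, 0 ≤ rsPair (zc R ω (R.play {j} l)) (R.α v)) := by
    intro l hl v
    exact (R.notSad_iff j ω hω _ v).mp (hl.2 v)
  have hplayz : ∀ l : List (Fin n), zc R ω (R.play {j} l) = R.wordProd l.reverse (-ω) := by
    intro l
    have : R.play {j} l = List.foldl (R.fire {j}) 0 l := rfl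
    rw [this, R.play_zc j ω hω l 0, R.zc_zero]
  have huniq : ∀ l, R.MaximalSeq {j} l → R.play {j} l = cfin := by
    intro l hl
    have hd1 := hdomfin l hl
    have hd0 := hdomfin l₀ hl₀max
    have hrel : zc R ω cfin = R.wordProd (l₀.reverse ++ l) (zc R ω (R.play {j} l)) := by
      rw [R.wordProd_append, hplayz l, R.wordProd_cancel_reverse l (-ω)]
      exact hplayz l₀
    have hud := R.unique_dom (L := l₀.reverse ++ l) (z := zc R ω (R.play {j} l)) hd1
      (by rw [← hrel]; exact hd0)
    have hzeq : zc R ω cfin = zc R ω (R.play {j} l) := by rw [hrel, hud]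
    have hsums : ∑ v, ((R.play {j} l) v : ℝ) • R.α v = ∑ v, (cfin v : ℝ) • R.α v := by
      unfold zc at hzeq
      exact (sub_left_inj.mp hzeq).symm
    exact R.coords_injZ _ _ hsums
  refine ⟨cfin, ⟨l₀, hl₀max⟩, huniq, ?_⟩
  have hzW : ∀ v, 0 ≤ rsPair (R.wordProd L₀ (-ω)) (R.α v) := by
    intro v
    have hδΦ : R.wordProd L₀.reverse (R.α v) ∈ R.Φ := R.wordProd_mem (R.α_mem v) _
    have hδneg : IsPos R (-(R.wordProd L₀.reverse (R.α v))) :=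
      R.maps_pos_neg ζ hζ L₀.reverse hfwdrev (R.α_mem v) (R.isPos_alpha v)
    have hpair : rsPair (R.wordProd L₀ (-ω)) (R.α v)
        = rsPair ω (-(R.wordProd L₀.reverse (R.α v))) := by
      calc rsPair (R.wordProd L₀ (-ω)) (R.α v)
          = rsPair (R.wordProd L₀ (-ω)) (R.wordProd L₀ (R.wordProd L₀.reverse (R.α v))) := by
            rw [R.wordProd_cancel_reverse]
        _ = rsPair (-ω) (R.wordProd L₀.reverse (R.α v)) := R.rsPair_wordProd _ _ _
        _ = rsPair ω (-(R.wordProd L₀.reverse (R.α v))) := by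
            rw [rsPair_neg_left, rsPair_neg_right]
    rw [hpair]
    obtain ⟨kk, hkk, hkknn, -⟩ := R.coroot_decomp (R.neg_mem hδΦ) hδneg
    rw [rsPair_eq_inner_coroot, R.omega_coroot_inner j ω hω hkk]
    exact_mod_cast hkknn j
  have hstar : zc R ω cfin = R.wordProd L₀ (-ω) := by
    have hd0 := hdomfin l₀ hl₀max
    have hrel : R.wordProd L₀ (-ω) = R.wordProd (L₀ ++ l₀) (zc R ω cfin) := by
      rw [R.wordProd_append, hplayz l₀, R.wordProd_cancel_reverse]
    have hud := R.unique_dom (L := L₀ ++ l₀) (z := zc R ω cfin) hd0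
      (by rw [← hrel]; exact hzW)
    rw [hrel, hud]
  have hinner1 : ⟪zc R ω cfin, rho2 R⟫ = ⟪ω, rho2 R⟫ := by
    rw [hstar, R.inner_wordProd_left, R.w0_rho2 ζ hζ L₀ hL₀, inner_neg_neg]
  have hsum1 : ∑ v, (cfin v : ℝ) * 2 = ⟪zc R ω cfin, rho2 R⟫ + ⟪ω, rho2 R⟫ := by
    have e1 : ∑ v, (cfin v : ℝ) * 2 = ⟪∑ v, (cfin v : ℝ) • R.α v, rho2 R⟫ := by
      rw [sum_inner]
      exact (Finset.sum_congr rfl (fun v _ => by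
        rw [real_inner_smul_left, R.inner_alpha_rho2 v])).symm
    have e2 : ∑ v, (cfin v : ℝ) • R.α v = zc R ω cfin + ω := by
      unfold zc
      abel
    rw [e1, e2, inner_add_left]
  have hLHS : (∑ v, (cfin v : ℝ)) = ⟪ω, rho2 R⟫ := by
    rw [hinner1] at hsum1
    rw [← Finset.sum_mul] at hsum1
    linarith
  have hstep : ∑ γ ∈ R.posRoots.filter (fun γ => rsCoroot γ ∉
        Submodule.span ℝ ((fun i => rsCoroot (R.α i)) '' {i : Fin n | i ≠ j})),
        R.corootCoeffs (rsCoroot γ) j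
      = ∑ γ ∈ R.posRoots, R.corootCoeffs (rsCoroot γ) j := by
    apply Finset.sum_subset (Finset.filter_subset _ _)
    intro γ hγ hnmem
    have hsp : rsCoroot γ ∈ Submodule.span ℝ
        ((fun i => rsCoroot (R.α i)) '' {i : Fin n | i ≠ j}) := by
      by_contra hcon
      exact hnmem (Finset.mem_filter.mpr ⟨hγ, hcon⟩)
    obtain ⟨hΦ, hpos⟩ := R.mem_posRoots.mp hγ
    obtain ⟨kk, hkk, -, -⟩ := R.coroot_decomp hΦ hpos
    rw [R.corootCoeffs_unique hkk]
    exact R.span_coroot_coeff_zero j hkk hsp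
  have hRHS : ((∑ γ ∈ R.posRoots, R.corootCoeffs (rsCoroot γ) j : ℤ) : ℝ) = ⟪ω, rho2 R⟫ := by
    push_cast
    have e1 : ∀ γ ∈ R.posRoots, ((R.corootCoeffs (rsCoroot γ) j : ℤ) : ℝ) = ⟪ω, rsCoroot γ⟫ := by
      intro γ hγ
      obtain ⟨hΦ, hpos⟩ := R.mem_posRoots.mp hγ
      obtain ⟨kk, hkk, -, -⟩ := R.coroot_decomp hΦ hpos
      rw [R.corootCoeffs_unique hkk]
      exact (R.omega_coroot_inner j ω hω hkk).symm
    rw [Finset.sum_congr rfl e1, ← inner_sum]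
    rfl
  have hfinal : ((∑ v, cfin v : ℤ) : ℝ)
      = ((∑ γ ∈ R.posRoots.filter (fun γ => rsCoroot γ ∉
          Submodule.span ℝ ((fun i => rsCoroot (R.α i)) '' {i : Fin n | i ≠ j})),
          R.corootCoeffs (rsCoroot γ) j : ℤ) : ℝ) := by
    have h1 : ((∑ v, cfin v : ℤ) : ℝ) = ∑ v, (cfin v : ℝ) := by push_cast; rfl
    rw [h1, hLHS, hstep, hRHS]
  exact_mod_cast hfinal
end
end

section
/- Let (i_1,…,i_m) be a valid firing sequence in the Modified Kostant Game with active set I, let c^{(m)} be the resulting configuration, set w_m = s_{i_m} ⋯ s_{i_1} and β = Σ_{p∈I} β_p in the extended space E'. Then for every vertex v ∈ {1,…,n}, the vertex v is sad in the configuration c^{(m)} if and only if ⟨w_m(β), α_v^∨⟩ < 0. -/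
open scoped Classical RealInnerProductSpace

noncomputable section

variable {n d : ℕ}

section Aux

variable {n d : ℕ} (R : RootSystemBase n d)

lemma aux_cartan_cast (u v : Fin n) :
    (R.cartan u v : ℝ) = rsPair (R.α u) (R.α v) := by
  obtain ⟨k, hk⟩ := R.crystallographic _ (R.α_mem u) _ (R.α_mem v)
  rw [RootSystemBase.cartan, hk, Int.floor_intCast]

lemma aux_cartan_self (v : Fin n) : R.cartan v v = 2 := by
  have h : (R.cartan v v : ℝ) = 2 := by
    rw [aux_cartan_cast]
    unfold rsPair
    rw [mul_div_assoc, div_self (R.inner_alpha_ne_zero v), mul_one]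
  exact_mod_cast h

lemma aux_corootForm_alpha (u v : Fin n) :
    corootForm (R.α v) (R.α u) = (R.cartan u v : ℝ) := by
  rw [aux_cartan_cast]; rfl

lemma aux_corootForm_sum (c : Fin n → ℤ) (v : Fin n) :
    corootForm (R.α v) (∑ u, (c u : ℝ) • R.α u)
      = ((∑ u, R.cartan u v * c u : ℤ) : ℝ) := by
  rw [map_sum]
  push_cast
  refine Finset.sum_congr rfl fun u _ => ?_
  rw [map_smul, aux_corootForm_alpha, smul_eq_mul]
  ring

lemma aux_sum_eq (I : Finset (Fin n)) (c : Fin n → ℤ) (v : Fin n) :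
    (∑ u, R.cartan u v * c u) - (if v ∈ I then 1 else 0)
      = 2 * c v - R.chipBound I c v := by
  have hsum : ∑ u, R.cartan u v * c u
      = R.cartan v v * c v + ∑ u ∈ Finset.univ.erase v, R.cartan u v * c u :=
    (Finset.add_sum_erase _ _ (Finset.mem_univ v)).symm
  rw [RootSystemBase.chipBound, hsum, aux_cartan_self]
  have h : ∑ u ∈ Finset.univ.erase v, -R.cartan u v * c u
      = -∑ u ∈ Finset.univ.erase v, R.cartan u v * c u := by
    rw [← Finset.sum_neg_distrib]
    exact Finset.sum_congr rfl fun u _ => by ring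
  rw [h]; ring

lemma aux_extForm_val (I : Finset (Fin n)) (c : Fin n → ℤ) (v : Fin n) :
    extForm R I v ((∑ u, (c u : ℝ) • R.α u, fun _ => 1) : ExtSp n d I)
      = ((2 * c v - R.chipBound I c v : ℤ) : ℝ) := by
  rw [R.extForm_apply]
  simp only [aux_corootForm_sum]
  rw [← aux_sum_eq R I c v]
  by_cases h : v ∈ I <;> simp [h]

lemma aux_key (I : Finset (Fin n)) (l : List (Fin n)) :
    R.extSeqProd I l (betaVec n d I)
      = (∑ u, ((R.play I l u : ℝ)) • R.α u, fun _ => 1) := by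
  induction l using List.reverseRecOn with
  | nil =>
    simp [RootSystemBase.extSeqProd, RootSystemBase.play, betaVec]
  | append_singleton l v ih =>
    have hseq : R.extSeqProd I (l ++ [v]) (betaVec n d I)
        = R.extRefl I v (R.extSeqProd I l (betaVec n d I)) := by
      simp only [RootSystemBase.extSeqProd, List.reverse_append, List.map_append, List.map_cons, List.map_nil, List.reverse_cons, List.reverse_nil, List.nil_append, List.singleton_append, List.prod_cons]
      rfl
    have hplay : R.play I (l ++ [v]) = R.fire I (R.play I l) v := by
      simp [RootSystemBase.play, List.foldl_append]
    rw [hseq, ih, hplay]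
    set c : Fin n → ℤ := R.play I l with hc
    rw [RootSystemBase.extRefl, Module.reflection_apply, aux_extForm_val]
    refine Prod.ext ?_ ?_
    · -- first components
      show (∑ u, (c u : ℝ) • R.α u)
          - ((2 * c v - R.chipBound I c v : ℤ) : ℝ) • R.α v
          = ∑ u, ((R.fire I c v u : ℝ)) • R.α u
      have hsplit : ∀ (f : Fin n → EuclideanSpace ℝ (Fin d)),
          ∑ u, f u = f v + ∑ u ∈ Finset.univ.erase v, f u :=
        fun f => (Finset.add_sum_erase _ f (Finset.mem_univ v)).symm
      have h1 : (∑ u, ((R.fire I c v u : ℝ)) • R.α u)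
          = ((R.chipBound I c v - c v : ℤ) : ℝ) • R.α v
            + ∑ u ∈ Finset.univ.erase v, (c u : ℝ) • R.α u := by
        rw [hsplit]
        congr 1
        · simp [RootSystemBase.fire]
        · refine Finset.sum_congr rfl fun u hu => ?_
          rw [RootSystemBase.fire, Function.update_of_ne (Finset.ne_of_mem_erase hu)]
      have h2 : (∑ u, (c u : ℝ) • R.α u)
          = (c v : ℝ) • R.α v + ∑ u ∈ Finset.univ.erase v, (c u : ℝ) • R.α u :=
        hsplit _
      have hscal : ((c v : ℤ) : ℝ) - ((2 * c v - R.chipBound I c v : ℤ) : ℝ)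
          = ((R.chipBound I c v - c v : ℤ) : ℝ) := by
        push_cast; ring
      calc (∑ u, (c u : ℝ) • R.α u)
            - ((2 * c v - R.chipBound I c v : ℤ) : ℝ) • R.α v
          = ((c v : ℝ) - ((2 * c v - R.chipBound I c v : ℤ) : ℝ)) • R.α v
            + ∑ u ∈ Finset.univ.erase v, (c u : ℝ) • R.α u := by
            rw [h2, sub_smul]; abel
        _ = ∑ u, ((R.fire I c v u : ℝ)) • R.α u := by
            rw [h1]
            push_cast
            ring_nf
    · -- second components
      show (fun _ => (1 : ℝ)) - ((2 * c v - R.chipBound I c v : ℤ) : ℝ) • (0 : _)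
          = fun _ => (1 : ℝ)
      simp

end Aux

/-- For a valid firing sequence with resulting configuration `c^{(m)}` and
`w_m = s_{i_m} ⋯ s_{i_1}`, a vertex `v` is sad in `c^{(m)}` iff `⟨w_m(β), α_v^∨⟩ < 0`. -/
theorem statement10 {n d : ℕ} (R : RootSystemBase n d) (I : Finset (Fin n))
    (l : List (Fin n)) (hl : R.Valid I l) (v : Fin n) :
    R.Sad I (R.play I l) v ↔
      R.extPair I (R.extSeqProd I l (betaVec n d I)) v < 0 := by
  rw [RootSystemBase.extPair, aux_key, aux_extForm_val, RootSystemBase.Sad]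
  rw [show ((2 * R.play I l v - R.chipBound I (R.play I l) v : ℤ) : ℝ) < 0
      ↔ 2 * R.play I l v - R.chipBound I (R.play I l) v < 0 by exact_mod_cast Iff.rfl]
  omega
end
end

section
/- For any subset Δ_P ⊆ Δ of the simple roots of a finite crystallographic root system Φ, the inequality Σ_{β ∈ Δ \ Δ_P} ( Σ_{α ∈ Φ^+ \ Φ_{Δ_P}^+} ⟨α, β^∨⟩ − 1 ) ≤ |Φ^+ \ Φ_{Δ_P}^+| holds. -/
open scoped Classical RealInnerProductSpace

noncomputable section

variable {n d : ℕ}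

namespace S15

variable {n d : ℕ} (R : RootSystemBase n d)

/-- Chosen integer value of the pairing. -/
def zp (β γ : EuclideanSpace ℝ (Fin d)) : ℤ := ⌊rsPair β γ⌋

lemma rsPair_eq_form (x γ : EuclideanSpace ℝ (Fin d)) : rsPair x γ = corootForm γ x := rfl

lemma zp_cast {β γ : EuclideanSpace ℝ (Fin d)} (hβ : β ∈ R.Φ) (hγ : γ ∈ R.Φ) :
    ((zp β γ : ℤ) : ℝ) = rsPair β γ := by
  obtain ⟨k, hk⟩ := R.crystallographic β hβ γ hγ
  rw [zp, hk, Int.floor_intCast]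

/-- Chosen integer coefficients of a root in the base. -/
noncomputable def co (β : EuclideanSpace ℝ (Fin d)) : Fin n → ℤ :=
  if h : β ∈ R.Φ then (R.base β h).choose else 0

lemma co_spec {β : EuclideanSpace ℝ (Fin d)} (hβ : β ∈ R.Φ) :
    β = ∑ i, ((co R β i : ℤ) : ℝ) • R.α i ∧
      ((∀ i, 0 ≤ co R β i) ∨ (∀ i, co R β i ≤ 0)) := by
  rw [co, dif_pos hβ]
  exact (R.base β hβ).choose_spec

lemma unique_coeff {c c' : Fin n → ℝ}
    (h : ∑ i, c i • R.α i = ∑ i, c' i • R.α i) : c = c' := by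
  have h0 : ∑ i, (c i - c' i) • R.α i = 0 := by
    simp only [sub_smul, Finset.sum_sub_distrib, h, sub_self]
  have := Fintype.linearIndependent_iff.mp R.indep _ h0
  funext i
  have := this i
  linarith [this]

lemma co_eq_of {β : EuclideanSpace ℝ (Fin d)} (hβ : β ∈ R.Φ) {c : Fin n → ℤ}
    (h : β = ∑ i, ((c i : ℤ) : ℝ) • R.α i) : co R β = c := by
  have h1 := (co_spec R hβ).1
  have := unique_coeff R (h1.symm.trans h)
  funext i
  exact_mod_cast congrFun this i

lemma co_sum {β : EuclideanSpace ℝ (Fin d)} (hβ : β ∈ R.Φ) :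
    β = ∑ i, ((co R β i : ℤ) : ℝ) • R.α i := (co_spec R hβ).1

lemma mem_pos_iff {β : EuclideanSpace ℝ (Fin d)} :
    β ∈ R.posRoots ↔ β ∈ R.Φ ∧ ∀ i, 0 ≤ co R β i := by
  constructor
  · rintro hβ
    rw [RootSystemBase.posRoots, Finset.mem_filter] at hβ
    obtain ⟨hΦ, c, hc, hcpos⟩ := hβ
    refine ⟨hΦ, ?_⟩
    rw [co_eq_of R hΦ hc]
    exact hcpos
  · rintro ⟨hΦ, hpos⟩
    rw [RootSystemBase.posRoots, Finset.mem_filter]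
    exact ⟨hΦ, co R β, co_sum R hΦ, hpos⟩

lemma pos_subset : R.posRoots ⊆ R.Φ := Finset.filter_subset _ _

lemma alpha_co (b : Fin n) : co R (R.α b) = fun i => if i = b then 1 else 0 := by
  apply co_eq_of R (R.α_mem b)
  simp [Finset.sum_ite_eq]

lemma alpha_mem_pos (b : Fin n) : R.α b ∈ R.posRoots := by
  rw [mem_pos_iff, alpha_co]
  exact ⟨R.α_mem b, fun i => by dsimp only; split <;> simp⟩

end S15
namespace S15

variable {n d : ℕ} (R : RootSystemBase n d)

lemma pair_alpha_self (i : Fin n) : rsPair (R.α i) (R.α i) = 2 :=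
  R.corootForm_alpha_self i

lemma pair_expand {β : EuclideanSpace ℝ (Fin d)} (hβ : β ∈ R.Φ)
    (γ : EuclideanSpace ℝ (Fin d)) :
    rsPair β γ = ∑ i, ((co R β i : ℤ) : ℝ) * rsPair (R.α i) γ := by
  conv_lhs => rw [co_sum R hβ]
  rw [rsPair_eq_form, map_sum]
  simp [rsPair_eq_form]

lemma pair_nonpos {i j : Fin n} (hij : i ≠ j) : rsPair (R.α i) (R.α j) ≤ 0 := by
  by_contra h
  push_neg at h
  set k : ℤ := zp (R.α i) (R.α j) with hkdef
  have hk : (k : ℝ) = rsPair (R.α i) (R.α j) := zp_cast R (R.α_mem i) (R.α_mem j)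
  have hβ' : R.α i - rsPair (R.α i) (R.α j) • R.α j ∈ R.Φ :=
    R.reflClosed _ (R.α_mem i) _ (R.α_mem j)
  have hk1 : 1 ≤ k := by
    have : (0:ℝ) < (k:ℝ) := by rw [hk]; exact h
    exact_mod_cast this
  set c : Fin n → ℤ := fun u => (if u = i then 1 else 0) - (if u = j then k else 0) with hcdef
  have hc : R.α i - rsPair (R.α i) (R.α j) • R.α j = ∑ u, ((c u : ℤ) : ℝ) • R.α u := by
    rw [← hk]
    simp only [hcdef]
    push_cast
    simp only [sub_smul, Finset.sum_sub_distrib]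
    congr 1 <;> simp [ite_smul, Finset.sum_ite_eq']
  have hco := co_eq_of R hβ' hc
  rcases (co_spec R hβ').2 with hs | hs
  · have h1 := hs j
    rw [hco] at h1
    simp only [hcdef] at h1
    rw [if_neg (Ne.symm hij)] at h1
    simp at h1
    omega
  · have h1 := hs i
    rw [hco] at h1
    simp only [hcdef] at h1
    rw [if_neg hij] at h1
    simp at h1

lemma supp_single {a : EuclideanSpace ℝ (Fin d)} (ha : a ∈ R.posRoots) (b : Fin n)
    (h : ∀ u, u ≠ b → co R a u = 0) : a = R.α b := by
  have haΦ := pos_subset R ha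
  have hab : a = ((co R a b : ℤ) : ℝ) • R.α b := by
    conv_lhs => rw [co_sum R haΦ]
    rw [Finset.sum_eq_single b (fun u _ hu => by rw [h u hu]; simp) (by simp)]
  have hm : ((co R a b : ℤ) : ℝ) • R.α b ∈ R.Φ := hab ▸ haΦ
  rcases R.reduced (R.α b) (R.α_mem b) _ hm with h1 | h1
  · rw [hab, h1, one_smul]
  · exfalso
    have h2 : (co R a b : ℝ) = -1 := h1
    have h3 : co R a b = -1 := by exact_mod_cast h2
    have := (mem_pos_iff R).mp ha |>.2 b
    omega

lemma pair_reflect (a : EuclideanSpace ℝ (Fin d)) (b : Fin n) :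
    rsPair (a - rsPair a (R.α b) • R.α b) (R.α b) = - rsPair a (R.α b) := by
  simp only [rsPair_eq_form, map_sub, map_smul, smul_eq_mul, R.corootForm_alpha_self]
  ring

lemma srefl_pos {a : EuclideanSpace ℝ (Fin d)} {b : Fin n}
    (ha : a ∈ R.posRoots) (hne : a ≠ R.α b) :
    a - rsPair a (R.α b) • R.α b ∈ R.posRoots ∧
      a - rsPair a (R.α b) • R.α b ≠ R.α b := by
  have haΦ := pos_subset R ha
  set k : ℤ := zp a (R.α b) with hkdef
  have hk : (k : ℝ) = rsPair a (R.α b) := zp_cast R haΦ (R.α_mem b)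
  have hβ' : a - rsPair a (R.α b) • R.α b ∈ R.Φ := R.reflClosed _ haΦ _ (R.α_mem b)
  set c : Fin n → ℤ := fun u => co R a u - (if u = b then k else 0) with hcdef
  have hc : a - rsPair a (R.α b) • R.α b = ∑ u, ((c u : ℤ) : ℝ) • R.α u := by
    rw [← hk]
    simp only [hcdef]
    push_cast
    simp only [sub_smul, Finset.sum_sub_distrib]
    congr 1
    · exact co_sum R haΦ
    · simp [ite_smul, Finset.sum_ite_eq']
  have hco := co_eq_of R hβ' hc
  have hpos : a - rsPair a (R.α b) • R.α b ∈ R.posRoots := by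
    rcases (co_spec R hβ').2 with hs | hs
    · exact (mem_pos_iff R).mpr ⟨hβ', hs⟩
    · exfalso
      apply hne
      apply supp_single R ha b
      intro u hu
      have h1 := hs u
      rw [hco] at h1
      simp only [hcdef, if_neg hu, sub_zero] at h1
      have h2 := (mem_pos_iff R).mp ha |>.2 u
      omega
  refine ⟨hpos, fun hcon => hne ?_⟩
  apply supp_single R ha b
  intro u hu
  have h1 : co R (a - rsPair a (R.α b) • R.α b) u = 0 := by
    rw [hcon, alpha_co]
    simp [hu]
  rw [hco] at h1
  simp only [hcdef, if_neg hu, sub_zero] at h1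
  exact h1

lemma sum_pair_eq_two (b : Fin n) :
    ∑ a ∈ R.posRoots, rsPair a (R.α b) = 2 := by
  rw [← Finset.add_sum_erase _ _ (alpha_mem_pos R b), pair_alpha_self]
  have h0 : ∑ a ∈ R.posRoots.erase (R.α b), rsPair a (R.α b) = 0 := by
    apply Finset.sum_involution (g := fun a _ => a - rsPair a (R.α b) • R.α b)
    · intro a _
      rw [pair_reflect]
      ring
    · intro a _ hfa hcon
      apply hfa
      have : rsPair a (R.α b) • R.α b = 0 := by
        have := sub_eq_self.mp hcon
        exact this
      rcases smul_eq_zero.mp this with h | h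
      · exact h
      · exact absurd h (R.alpha_ne_zero b)
    · intro a ha
      rw [Finset.mem_erase] at ha ⊢
      obtain ⟨hne, hmem⟩ := ha
      have := srefl_pos R hmem hne
      exact ⟨this.2, this.1⟩
    · intro a ha
      rw [pair_reflect, neg_smul, sub_neg_eq_add, sub_add_cancel]
  rw [h0, add_zero]

end S15
namespace S15

variable {n d : ℕ} (R : RootSystemBase n d) {P : Finset (Fin n)}

lemma parPos_subset : R.parPos P ⊆ R.posRoots := Finset.filter_subset _ _

lemma parPos_co {β : EuclideanSpace ℝ (Fin d)} (h : β ∈ R.parPos P) :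
    ∀ i ∉ P, co R β i = 0 := by
  rw [RootSystemBase.parPos, Finset.mem_filter] at h
  obtain ⟨hpos, hspan⟩ := h
  have hβΦ : β ∈ R.Φ := pos_subset R hpos
  rw [Set.image_eq_range] at hspan
  obtain ⟨c, hc⟩ := (Submodule.mem_span_range_iff_exists_fun ℝ).mp hspan
  set c' : Fin n → ℝ := fun u => if hu : u ∈ P then c ⟨u, hu⟩ else 0 with hc'def
  have hsum : ∑ u, c' u • R.α u = β := by
    rw [← hc]
    rw [← Finset.sum_subset (Finset.subset_univ P)
      (fun u _ hu => by rw [hc'def]; dsimp only; rw [dif_neg hu, zero_smul])]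
    rw [← Finset.sum_attach P (fun u => c' u • R.α u), Finset.univ_eq_attach]
    apply Finset.sum_congr rfl
    intro p _
    rw [hc'def]
    dsimp only
    rw [dif_pos p.2]
    simp
  have huniq : c' = fun u => ((co R β u : ℤ) : ℝ) :=
    unique_coeff R (hsum.trans (co_sum R hβΦ))
  intro i hi
  have := congrFun huniq i
  rw [hc'def] at this
  dsimp only at this
  rw [dif_neg hi] at this
  exact_mod_cast this.symm

lemma mem_parPos_of {β : EuclideanSpace ℝ (Fin d)} (hpos : β ∈ R.posRoots)
    (h : ∀ i ∉ P, co R β i = 0) : β ∈ R.parPos P := by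
  rw [RootSystemBase.parPos, Finset.mem_filter]
  refine ⟨hpos, ?_⟩
  have hβΦ : β ∈ R.Φ := pos_subset R hpos
  have : β = ∑ i ∈ P, ((co R β i : ℤ) : ℝ) • R.α i := by
    conv_lhs => rw [co_sum R hβΦ]
    rw [Finset.sum_subset (Finset.subset_univ P)
      (fun u _ hu => by rw [h u hu]; simp)]
  rw [this]
  apply Submodule.sum_mem
  intro i hi
  exact Submodule.smul_mem _ _ (Submodule.subset_span (Set.mem_image_of_mem _ hi))

lemma parPos_pair_nonpos {b : Fin n} (hb : b ∉ P) {a : EuclideanSpace ℝ (Fin d)}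
    (ha : a ∈ R.parPos P) : rsPair a (R.α b) ≤ 0 := by
  have haΦ : a ∈ R.Φ := pos_subset R (parPos_subset R ha)
  rw [pair_expand R haΦ]
  apply Finset.sum_nonpos
  intro i _
  by_cases hi : i ∈ P
  · have hib : i ≠ b := fun h => hb (h ▸ hi)
    have h1 : (0:ℝ) ≤ ((co R a i : ℤ) : ℝ) := by
      exact_mod_cast (mem_pos_iff R).mp (parPos_subset R ha) |>.2 i
    exact mul_nonpos_of_nonneg_of_nonpos h1 (pair_nonpos R hib)
  · rw [parPos_co R ha i hi]
    simp

lemma inner_pos_of_ne {x : EuclideanSpace ℝ (Fin d)} (hx : x ≠ 0) : 0 < ⟪x, x⟫ :=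
  lt_of_le_of_ne real_inner_self_nonneg
    (fun h => hx ((inner_self_eq_zero (𝕜 := ℝ)).mp h.symm))

lemma cs_strict {b : Fin n} (hb : b ∉ P) {a : EuclideanSpace ℝ (Fin d)}
    (ha : a ∈ R.parPos P) : rsPair a (R.α b) * rsPair (R.α b) a < 4 := by
  have haΦ : a ∈ R.Φ := pos_subset R (parPos_subset R ha)
  have haNe : a ≠ 0 := R.nonzero _ haΦ
  have hbNe : R.α b ≠ 0 := R.alpha_ne_zero b
  have hspan : a ∈ Submodule.span ℝ (R.α '' (P : Set (Fin n))) := by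
    rw [RootSystemBase.parPos, Finset.mem_filter] at ha
    exact ha.2
  have hnotin : R.α b ∉ Submodule.span ℝ (R.α '' (P : Set (Fin n))) :=
    R.indep.notMem_span_image (by exact_mod_cast hb)
  have hinner : ‖⟪a, R.α b⟫‖ < ‖a‖ * ‖R.α b‖ := by
    rcases lt_or_eq_of_le (norm_inner_le_norm (𝕜 := ℝ) a (R.α b)) with h | h
    · exact h
    · exfalso
      obtain ⟨r, -, hr⟩ := (norm_inner_eq_norm_iff (𝕜 := ℝ) haNe hbNe).mp h
      exact hnotin (hr ▸ Submodule.smul_mem _ r hspan)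
  have hA : (0:ℝ) < ⟪a, a⟫ := inner_pos_of_ne haNe
  have hB : (0:ℝ) < ⟪R.α b, R.α b⟫ := inner_pos_of_ne hbNe
  have hx2 : ⟪a, R.α b⟫ * ⟪a, R.α b⟫ < ⟪a, a⟫ * ⟪R.α b, R.α b⟫ := by
    have h1 : ⟪a, R.α b⟫ * ⟪a, R.α b⟫ = ‖⟪a, R.α b⟫‖ * ‖⟪a, R.α b⟫‖ := by
      rw [Real.norm_eq_abs, abs_mul_abs_self]
    rw [h1, real_inner_self_eq_norm_mul_norm, real_inner_self_eq_norm_mul_norm]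
    calc ‖⟪a, R.α b⟫‖ * ‖⟪a, R.α b⟫‖ < (‖a‖ * ‖R.α b‖) * (‖a‖ * ‖R.α b‖) :=
          mul_self_lt_mul_self (norm_nonneg _) hinner
      _ = ‖a‖ * ‖a‖ * (‖R.α b‖ * ‖R.α b‖) := by ring
  have hprod : rsPair a (R.α b) * rsPair (R.α b) a =
      4 * (⟪a, R.α b⟫ * ⟪a, R.α b⟫) / (⟪a, a⟫ * ⟪R.α b, R.α b⟫) := by
    rw [rsPair, rsPair, real_inner_comm (R.α b) a]
    field_simp
    ring
  rw [hprod, div_lt_iff₀ (by positivity)]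
  nlinarith [hx2]

lemma zp_nonpos {b : Fin n} (hb : b ∉ P) {a : EuclideanSpace ℝ (Fin d)}
    (ha : a ∈ R.parPos P) : zp a (R.α b) ≤ 0 := by
  have haΦ : a ∈ R.Φ := pos_subset R (parPos_subset R ha)
  have : ((zp a (R.α b) : ℤ) : ℝ) ≤ 0 := by
    rw [zp_cast R haΦ (R.α_mem b)]
    exact parPos_pair_nonpos R hb ha
  exact_mod_cast this

lemma zp_neg_facts {b : Fin n} (hb : b ∉ P) {a : EuclideanSpace ℝ (Fin d)}
    (ha : a ∈ R.parPos P) (hneg : zp a (R.α b) < 0) :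
    zp (R.α b) a < 0 ∧ zp a (R.α b) * zp (R.α b) a ≤ 3 := by
  have haΦ : a ∈ R.Φ := pos_subset R (parPos_subset R ha)
  have hbΦ := R.α_mem b
  have hA : (0:ℝ) < ⟪a, a⟫ := inner_pos_of_ne (R.nonzero _ haΦ)
  have hB : (0:ℝ) < ⟪R.α b, R.α b⟫ := inner_pos_of_ne (R.alpha_ne_zero b)
  have hpairneg : rsPair a (R.α b) < 0 := by
    rw [← zp_cast R haΦ hbΦ]
    exact_mod_cast hneg
  have hxneg : ⟪a, R.α b⟫ < 0 := by
    rw [rsPair] at hpairneg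
    by_contra hc
    push_neg at hc
    have : 0 ≤ 2 * ⟪a, R.α b⟫ / ⟪R.α b, R.α b⟫ := by positivity
    linarith
  have hpair2neg : rsPair (R.α b) a < 0 := by
    rw [rsPair, real_inner_comm a (R.α b)]
    apply div_neg_of_neg_of_pos (by linarith) hA
  constructor
  · have : ((zp (R.α b) a : ℤ) : ℝ) < 0 := by
      rw [zp_cast R hbΦ haΦ]; exact hpair2neg
    exact_mod_cast this
  · have h4 : ((zp a (R.α b) * zp (R.α b) a : ℤ) : ℝ) < 4 := by
      push_cast
      rw [zp_cast R haΦ hbΦ, zp_cast R hbΦ haΦ]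
      exact cs_strict R hb ha
    have : zp a (R.α b) * zp (R.α b) a < 4 := by exact_mod_cast h4
    omega

end S15
namespace S15

variable {n d : ℕ} (R : RootSystemBase n d) {P : Finset (Fin n)}

lemma string_mem {b : Fin n} (hb : b ∉ P) {a : EuclideanSpace ℝ (Fin d)}
    (ha : a ∈ R.parPos P) {k : ℤ} (h1 : 1 ≤ k) (h2 : k ≤ -(zp a (R.α b))) :
    a + ((k : ℤ) : ℝ) • R.α b ∈ R.Φ := by
  have haΦ : a ∈ R.Φ := pos_subset R (parPos_subset R ha)
  have hbΦ := R.α_mem b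
  have hneg : zp a (R.α b) < 0 := by omega
  obtain ⟨hzb, hprod⟩ := zp_neg_facts R hb ha hneg
  have hpa : rsPair a (R.α b) = ((zp a (R.α b) : ℤ) : ℝ) := (zp_cast R haΦ hbΦ).symm
  have hpb : rsPair (R.α b) a = ((zp (R.α b) a : ℤ) : ℝ) := (zp_cast R hbΦ haΦ).symm
  have hF1 : a + ((-(zp a (R.α b)) : ℤ) : ℝ) • R.α b ∈ R.Φ := by
    have h := R.reflClosed a haΦ (R.α b) hbΦ
    rw [hpa] at h
    have heq : a + ((-(zp a (R.α b)) : ℤ) : ℝ) • R.α b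
        = a - ((zp a (R.α b) : ℤ) : ℝ) • R.α b := by
      push_cast
      module
    rw [heq]
    exact h
  have hF2 : 2 ≤ -(zp a (R.α b)) → a + ((1 : ℤ) : ℝ) • R.α b ∈ R.Φ := by
    intro hm2
    have hzb1 : zp (R.α b) a = -1 := by
      have h3 : -1 ≤ zp (R.α b) a := by nlinarith
      omega
    have h := R.reflClosed (R.α b) hbΦ a haΦ
    rw [hpb, hzb1] at h
    have heq : a + ((1 : ℤ) : ℝ) • R.α b = R.α b - (((-1 : ℤ) : ℤ) : ℝ) • a := by
      push_cast
      module
    rw [heq]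
    exact h
  have hF3 : -(zp a (R.α b)) = 3 → a + ((2 : ℤ) : ℝ) • R.α b ∈ R.Φ := by
    intro hm3
    have hab := hF2 (by omega)
    have h := R.reflClosed _ hab (R.α b) hbΦ
    have hpair : rsPair (a + ((1 : ℤ) : ℝ) • R.α b) (R.α b) = -1 := by
      rw [rsPair_eq_form, map_add, map_smul, ← rsPair_eq_form, hpa,
        smul_eq_mul]
      have h9 : (corootForm (R.α b)) (R.α b) = 2 := R.corootForm_alpha_self b
      rw [h9]
      have h8 : zp a (R.α b) = -3 := by omega
      rw [h8]
      norm_num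
    rw [hpair] at h
    have heq : a + ((2 : ℤ) : ℝ) • R.α b
        = (a + ((1 : ℤ) : ℝ) • R.α b) - (-1 : ℝ) • R.α b := by
      push_cast
      module
    rw [heq]
    exact h
  have hm_le : -(zp a (R.α b)) ≤ 3 := by nlinarith
  have hk3 : k ≤ 3 := le_trans h2 hm_le
  interval_cases k
  · by_cases hm : -(zp a (R.α b)) = 1
    · have h := hF1
      rw [hm] at h
      exact h
    · exact hF2 (by omega)
  · by_cases hm : -(zp a (R.α b)) = 2
    · have h := hF1
      rw [hm] at h
      exact h
    · exact hF3 (by omega)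
  · have hm : -(zp a (R.α b)) = 3 := by omega
    have h := hF1
    rw [hm] at h
    exact h

end S15
namespace S15

variable {n d : ℕ} (R : RootSystemBase n d) {P : Finset (Fin n)}

lemma string_co {a : EuclideanSpace ℝ (Fin d)} (haΦ : a ∈ R.Φ) {b : Fin n} {k : ℤ}
    (hmem : a + ((k : ℤ) : ℝ) • R.α b ∈ R.Φ) :
    co R (a + ((k : ℤ) : ℝ) • R.α b) = fun u => co R a u + (if u = b then k else 0) := by
  apply co_eq_of R hmem
  have hsum : ∑ u, ((co R a u + (if u = b then k else 0) : ℤ) : ℝ) • R.α u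
      = (∑ u, ((co R a u : ℤ) : ℝ) • R.α u)
        + ∑ u, (if u = b then ((k : ℤ) : ℝ) else 0) • R.α u := by
    rw [← Finset.sum_add_distrib]
    apply Finset.sum_congr rfl
    intro u _
    rw [← add_smul]
    congr 1
    split <;> push_cast <;> ring
  rw [hsum, ← co_sum R haΦ]
  congr 1
  simp [ite_smul]

lemma string_pos {b : Fin n} (hb : b ∉ P) {a : EuclideanSpace ℝ (Fin d)}
    (ha : a ∈ R.parPos P) {k : ℤ} (h1 : 1 ≤ k) (h2 : k ≤ -(zp a (R.α b))) :
    (a + ((k : ℤ) : ℝ) • R.α b ∈ R.posRoots)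
      ∧ co R (a + ((k : ℤ) : ℝ) • R.α b) b = k
      ∧ ∀ i, i ∉ P → i ≠ b → co R (a + ((k : ℤ) : ℝ) • R.α b) i = 0 := by
  have haΦ : a ∈ R.Φ := pos_subset R (parPos_subset R ha)
  have hmem := string_mem R hb ha h1 h2
  have hco := string_co R haΦ hmem
  have hab : co R a b = 0 := parPos_co R ha b hb
  have hcob : co R (a + ((k : ℤ) : ℝ) • R.α b) b = k := by
    rw [hco]
    dsimp only
    rw [if_pos rfl, hab, zero_add]
  have hsupp : ∀ i, i ∉ P → i ≠ b → co R (a + ((k : ℤ) : ℝ) • R.α b) i = 0 := by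
    intro i hiP hib
    rw [hco]
    dsimp only
    rw [if_neg hib, parPos_co R ha i hiP, add_zero]
  refine ⟨?_, hcob, hsupp⟩
  rcases (co_spec R hmem).2 with hs | hs
  · exact (mem_pos_iff R).mpr ⟨hmem, hs⟩
  · exfalso
    have := hs b
    rw [hcob] at this
    omega

lemma exists_co_ne {a : EuclideanSpace ℝ (Fin d)} (haΦ : a ∈ R.Φ) :
    ∃ i, co R a i ≠ 0 := by
  by_contra h
  push_neg at h
  apply R.nonzero a haΦ
  rw [co_sum R haΦ]
  simp [h]

/-- The set of positive roots supported in `P ∪ {b}` but not in `P`. -/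
noncomputable def Tb (R : RootSystemBase n d) (P : Finset (Fin n)) (b : Fin n) :
    Finset (EuclideanSpace ℝ (Fin d)) :=
  (R.posRoots \ R.parPos P).filter (fun r => ∀ i, i ∉ P → i ≠ b → co R r i = 0)

lemma Tb_subset (b : Fin n) : Tb R P b ⊆ R.posRoots \ R.parPos P :=
  Finset.filter_subset _ _

lemma co_b_pos {b : Fin n} (hb : b ∉ P) {r : EuclideanSpace ℝ (Fin d)}
    (hr : r ∈ Tb R P b) : 1 ≤ co R r b := by
  rw [Tb, Finset.mem_filter, Finset.mem_sdiff] at hr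
  obtain ⟨⟨hpos, hnpar⟩, hsupp⟩ := hr
  have h0 : 0 ≤ co R r b := ((mem_pos_iff R).mp hpos).2 b
  rcases eq_or_lt_of_le h0 with h | h
  · exfalso
    apply hnpar
    apply mem_parPos_of R hpos
    intro i hiP
    by_cases hib : i = b
    · rw [hib, ← h]
    · exact hsupp i hiP hib
  · omega

lemma alpha_mem_Tb {b : Fin n} (hb : b ∉ P) : R.α b ∈ Tb R P b := by
  rw [Tb, Finset.mem_filter, Finset.mem_sdiff]
  refine ⟨⟨alpha_mem_pos R b, fun hc => ?_⟩, fun i _ hib => by rw [alpha_co]; simp [hib]⟩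
  have := parPos_co R hc b hb
  rw [alpha_co] at this
  simp at this

lemma Tb_disjoint {b b' : Fin n} (hb : b ∉ P) (hb' : b' ∉ P) (hne : b ≠ b') :
    Disjoint (Tb R P b) (Tb R P b') := by
  rw [Finset.disjoint_left]
  intro r hr hr'
  have h1 : co R r b' = 0 := by
    rw [Tb, Finset.mem_filter] at hr
    exact hr.2 b' hb' (Ne.symm hne)
  have h2 := co_b_pos R hb' hr'
  omega

lemma card_bound {b : Fin n} (hb : b ∉ P) :
    1 + ∑ a ∈ R.parPos P, (-(zp a (R.α b))).toNat ≤ (Tb R P b).card := by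
  classical
  set D := (R.parPos P).sigma (fun a => Finset.range ((-(zp a (R.α b))).toNat)) with hD
  have hDcard : D.card = ∑ a ∈ R.parPos P, (-(zp a (R.α b))).toNat := by
    rw [hD, Finset.card_sigma]
    simp
  set F : (Σ _ : EuclideanSpace ℝ (Fin d), ℕ) → EuclideanSpace ℝ (Fin d) :=
    fun x => x.1 + (((x.2 : ℕ) + 1 : ℤ) : ℝ) • R.α b with hF
  have hyp : ∀ x ∈ D, x.1 ∈ R.parPos P ∧ 1 ≤ ((x.2 : ℕ) + 1 : ℤ)
      ∧ ((x.2 : ℕ) + 1 : ℤ) ≤ -(zp x.1 (R.α b)) := by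
    intro x hx
    rw [hD, Finset.mem_sigma, Finset.mem_range] at hx
    refine ⟨hx.1, by omega, ?_⟩
    have := hx.2
    omega
  have hmaps : ∀ x ∈ D, F x ∈ (Tb R P b).erase (R.α b) := by
    intro x hx
    obtain ⟨hx1, hk1, hk2⟩ := hyp x hx
    obtain ⟨hpos, hcob, hsupp⟩ := string_pos R hb hx1 hk1 hk2
    have hxΦ : x.1 ∈ R.Φ := pos_subset R (parPos_subset R hx1)
    rw [Finset.mem_erase]
    constructor
    · intro hc
      obtain ⟨i, hi⟩ := exists_co_ne R hxΦ
      have hib : i ≠ b := fun h => hi (h ▸ parPos_co R hx1 b hb)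
      have h1 : co R (F x) i = co R x.1 i := by
        rw [hF]
        dsimp only
        rw [string_co R hxΦ (pos_subset R hpos)]
        dsimp only
        rw [if_neg hib, add_zero]
      rw [hc, alpha_co] at h1
      simp [hib] at h1
      exact hi h1.symm
    · rw [Tb, Finset.mem_filter, Finset.mem_sdiff]
      refine ⟨⟨hpos, fun hc => ?_⟩, hsupp⟩
      have := parPos_co R hc b hb
      rw [hcob] at this
      omega
  have hinj : Set.InjOn F D := by
    intro x hx y hy hxy
    obtain ⟨hx1, hkx1, hkx2⟩ := hyp x hx
    obtain ⟨hy1, hky1, hky2⟩ := hyp y hy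
    obtain ⟨-, hcobx, -⟩ := string_pos R hb hx1 hkx1 hkx2
    obtain ⟨-, hcoby, -⟩ := string_pos R hb hy1 hky1 hky2
    have hFx : F x = F y := hxy
    have hco : co R (F x) b = co R (F y) b := by rw [hFx]
    rw [hF] at hco
    dsimp only at hco
    rw [hcobx, hcoby] at hco
    have h2 : x.2 = y.2 := by omega
    have h1 : x.1 = y.1 := by
      rw [hF] at hFx
      dsimp only at hFx
      rw [h2] at hFx
      exact add_right_cancel hFx
    rcases x with ⟨a1, j1⟩
    rcases y with ⟨a2, j2⟩
    dsimp only at h1 h2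
    rw [h1, h2]
  have hle : D.card ≤ ((Tb R P b).erase (R.α b)).card :=
    Finset.card_le_card_of_injOn F hmaps hinj
  have hmem := alpha_mem_Tb R (P := P) hb
  have herase := Finset.card_erase_of_mem hmem
  have hpos : 1 ≤ (Tb R P b).card := Finset.card_pos.mpr ⟨_, hmem⟩
  omega

end S15
/-- For any subset `Δ_P ⊆ Δ` of the simple roots,
`∑_{β ∈ Δ \\ Δ_P} (∑_{α ∈ Φ⁺ \\ Φ_{Δ_P}⁺} ⟨α, β^∨⟩ − 1) ≤ |Φ⁺ \\ Φ_{Δ_P}⁺|`. -/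
theorem statement15 {n d : ℕ} (R : RootSystemBase n d) (P : Finset (Fin n)) :
    ∑ b ∈ Finset.univ \ P,
        ((∑ a ∈ R.posRoots \ R.parPos P, rsPair a (R.α b)) - 1)
      ≤ ((R.posRoots \ R.parPos P).card : ℝ) := by
  classical
  have key : ∀ b ∈ Finset.univ \ P,
      (∑ a ∈ R.posRoots \ R.parPos P, rsPair a (R.α b)) - 1
        ≤ ((S15.Tb R P b).card : ℝ) := by
    intro b hb
    have hbP : b ∉ P := (Finset.mem_sdiff.mp hb).2
    have hsplit : ∑ a ∈ R.posRoots \ R.parPos P, rsPair a (R.α b)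
        = 2 - ∑ a ∈ R.parPos P, rsPair a (R.α b) := by
      have h := Finset.sum_sdiff (f := fun a => rsPair a (R.α b))
        (S15.parPos_subset R (P := P))
      rw [S15.sum_pair_eq_two R b] at h
      linarith
    have hterm : ∑ a ∈ R.parPos P, rsPair a (R.α b)
        = -((∑ a ∈ R.parPos P, (-(S15.zp a (R.α b))).toNat : ℕ) : ℝ) := by
      push_cast
      rw [← Finset.sum_neg_distrib]
      apply Finset.sum_congr rfl
      intro a ha
      have haΦ : a ∈ R.Φ := S15.pos_subset R (S15.parPos_subset R ha)
      have hz := S15.zp_nonpos R hbP ha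
      have htn : (((-(S15.zp a (R.α b))).toNat : ℤ) : ℝ) = -((S15.zp a (R.α b) : ℤ) : ℝ) := by
        have : ((-(S15.zp a (R.α b))).toNat : ℤ) = -(S15.zp a (R.α b)) := by omega
        rw [this]
        push_cast
        ring
      rw [← S15.zp_cast R haΦ (R.α_mem b)]
      push_cast at htn ⊢
      linarith
    have hcard := S15.card_bound R (P := P) hbP
    have hcardR : ((1 + ∑ a ∈ R.parPos P, (-(S15.zp a (R.α b))).toNat : ℕ) : ℝ)
        ≤ ((S15.Tb R P b).card : ℝ) := by exact_mod_cast hcard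
    push_cast at hcardR
    rw [hsplit, hterm]
    push_cast
    linarith
  have hsum : ∑ b ∈ Finset.univ \ P,
      ((∑ a ∈ R.posRoots \ R.parPos P, rsPair a (R.α b)) - 1)
        ≤ ∑ b ∈ Finset.univ \ P, ((S15.Tb R P b).card : ℝ) :=
    Finset.sum_le_sum key
  have hdisj : ∀ b ∈ Finset.univ \ P, ∀ b' ∈ Finset.univ \ P, b ≠ b' →
      Disjoint (S15.Tb R P b) (S15.Tb R P b') := fun b hb b' hb' hne =>
    S15.Tb_disjoint R (Finset.mem_sdiff.mp hb).2 (Finset.mem_sdiff.mp hb').2 hne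
  have hbiU : ∑ b ∈ Finset.univ \ P, (S15.Tb R P b).card
      = ((Finset.univ \ P).biUnion (S15.Tb R P)).card :=
    (Finset.card_biUnion hdisj).symm
  have hsub : (Finset.univ \ P).biUnion (S15.Tb R P) ⊆ R.posRoots \ R.parPos P :=
    Finset.biUnion_subset.mpr fun b _ => S15.Tb_subset R b
  have hfin : ∑ b ∈ Finset.univ \ P, ((S15.Tb R P b).card : ℝ)
      ≤ ((R.posRoots \ R.parPos P).card : ℝ) := by
    have h1 : ((Finset.univ \ P).biUnion (S15.Tb R P)).card
        ≤ (R.posRoots \ R.parPos P).card := Finset.card_le_card hsub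
    have h2 : (∑ b ∈ Finset.univ \ P, (S15.Tb R P b).card : ℕ)
        ≤ (R.posRoots \ R.parPos P).card := by rw [hbiU]; exact h1
    exact_mod_cast h2
  linarith
end
end
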